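/- arXiv:2501.08602 — 3 statements merged into one kernel-verified Lean document; each statement's English description precedes it below -/
import Mathlib

section
/- Let s ≥ 0 be an integer. For every even integer n with n > N_s^even, the generalized Frobenius number of the three consecutive triangular numbers satisfies g(t_n, t_{n+1}, t_{n+2}; s) = ((n+1)(n+2)/4)·((2x_s^even + y_s^even + 3)n + 6x_s^even) − 1. -/
open Finset

/-- Number of representations of `m` as `∑ i, a i * x i` with nonnegative integers `x i`
(for positive weights `a i`, every solution satisfies `x i ≤ m`). -/
def repCount {k : ℕ} (a : Fin k → ℕ) (m : ℕ) : ℕ :=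
  (Finset.univ.filter (fun x : Fin k → Fin (m + 1) => ∑ i, a i * (x i : ℕ) = m)).card

/-- Representation count extended to the integers (no representations of negative numbers). -/
def repCountZ {k : ℕ} (a : Fin k → ℕ) (m : ℤ) : ℕ :=
  if 0 ≤ m then repCount a m.toNat else 0

/-- The generalized Frobenius number `g(a; s)`: the largest integer having at most `s`
representations by the tuple `a`. -/
noncomputable def genFrob {k : ℕ} (a : Fin k → ℕ) (s : ℕ) : ℤ :=
  sSup {m : ℤ | repCountZ a m ≤ s}

/-- The `n`-th triangular number `t n = n(n+1)/2`. -/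
def t (n : ℕ) : ℕ := n * (n + 1) / 2

/-- `N_s^even = 6⌊√(s+1)⌋ - 6`. -/
def NEven (s : ℕ) : ℤ := 6 * (Nat.sqrt (s + 1) : ℤ) - 6

/-- `N_s^odd = 6⌊(√(4s+5) - 1)/2⌋ - 3`. -/
def NOdd (s : ℕ) : ℤ := 6 * (((Nat.sqrt (4 * s + 5) - 1) / 2 : ℕ) : ℤ) - 3

/-- `δ_s = 1` if `s ≥ ⌊√s⌋² + ⌊√s⌋`, and `0` otherwise. -/
def deltaS (s : ℕ) : ℤ := if Nat.sqrt s ^ 2 + Nat.sqrt s ≤ s then 1 else 0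

/-- `q_s = 2⌊√s⌋ + 2 + δ_s`. -/
def qS (s : ℕ) : ℤ := 2 * (Nat.sqrt s : ℤ) + 2 + deltaS s

/-- `c_s = s - ⌊√s⌋² - δ_s⌊√s⌋`. -/
def cS (s : ℕ) : ℤ := (s : ℤ) - (Nat.sqrt s : ℤ) ^ 2 - deltaS s * (Nat.sqrt s : ℤ)

/-- For `s = k(k+1) + i` with `0 ≤ i ≤ 2k+1`: `x_s^even`. -/
def xEvenN (k i : ℕ) : ℕ := if i ≤ k then i else i - k - 1

/-- For `s = k(k+1) + i` with `0 ≤ i ≤ 2k+1`: `y_s^even`. -/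
def yEvenN (k i : ℕ) : ℕ := if i ≤ k then 2 * (k - i) else 4 * k + 3 - 2 * i

/-- For `s = k(k+1) + i` with `0 ≤ i ≤ 2k+1`: `x_s^odd`. -/
def xOddN (k i : ℕ) : ℕ := if i ≤ k then 2 * i else 2 * (i - k) - 1

/-- For `s = k(k+1) + i` with `0 ≤ i ≤ 2k+1`: `y_s^odd`. -/
def yOddN (k i : ℕ) : ℕ := if i ≤ k then k - i else 2 * k + 1 - i

namespace Frob

lemma t_eval (h : ℕ) : t (2*h) = h*(2*h+1) ∧ t (2*h+1) = (h+1)*(2*h+1) ∧ t (2*h+2) = (h+1)*(2*h+3) := by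
  unfold t
  refine ⟨?_, ?_, ?_⟩
  · rw [show 2*h*(2*h+1) = 2*(h*(2*h+1)) by ring, Nat.mul_div_cancel_left _ two_pos]
  · rw [show (2*h+1)*(2*h+1+1) = 2*((h+1)*(2*h+1)) by ring, Nat.mul_div_cancel_left _ two_pos]
  · rw [show (2*h+2)*(2*h+2+1) = 2*((h+1)*(2*h+3)) by ring, Nat.mul_div_cancel_left _ two_pos]

lemma sum_base (m c : ℕ) : ∑ q ∈ Finset.range m, (2*q+1+c) = m*m + m*c := by
  induction m with
  | zero => simp
  | succ m ih => rw [Finset.sum_range_succ, ih]; ring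

lemma sum_split (m j c1 c2 : ℕ) (hj : j ≤ m) :
    ∑ q ∈ Finset.range m, (2*q+1+(if q < j then c1 else c2))
      = j*j + j*c1 + (m*m + m*c2) - (j*j + j*c2) := by
  rw [Finset.range_eq_Ico, ← Finset.sum_Ico_consecutive _ (Nat.zero_le j) hj]
  have h1 : ∑ q ∈ Finset.Ico 0 j, (2*q+1+(if q < j then c1 else c2))
      = ∑ q ∈ Finset.Ico 0 j, (2*q+1+c1) := by
    apply Finset.sum_congr rfl; intro q hq
    simp only [Finset.mem_Ico] at hq
    rw [if_pos hq.2]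
  have h2 : ∑ q ∈ Finset.Ico j m, (2*q+1+(if q < j then c1 else c2))
      = ∑ q ∈ Finset.Ico j m, (2*q+1+c2) := by
    apply Finset.sum_congr rfl; intro q hq
    simp only [Finset.mem_Ico] at hq
    rw [if_neg (by omega)]
  rw [h1, h2]
  have h3 := Finset.sum_Ico_consecutive (fun q => 2*q+1+c2) (Nat.zero_le j) hj
  have e1 : ∑ q ∈ Finset.Ico 0 j, (2*q+1+c1) = j*j+j*c1 := by
    rw [← Finset.range_eq_Ico, sum_base]
  have e2 : ∑ q ∈ Finset.Ico 0 j, (2*q+1+c2) = j*j+j*c2 := by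
    rw [← Finset.range_eq_Ico, sum_base]
  have e3 : ∑ q ∈ Finset.Ico 0 m, (2*q+1+c2) = m*m+m*c2 := by
    rw [← Finset.range_eq_Ico, sum_base]
  simp only [e1, e2, e3] at *
  have : j*j + j*c2 ≤ m*m + m*c2 := by
    have := Nat.mul_le_mul hj hj
    have := Nat.mul_le_mul_right c2 hj
    omega
  omega

lemma repCount_triple (a1 a2 a3 N : ℕ) :
    repCount ![a1,a2,a3] N =
      ((Finset.range (N+1) ×ˢ Finset.range (N+1) ×ˢ Finset.range (N+1)).filter
        (fun p : ℕ × ℕ × ℕ => a1*p.1 + a2*p.2.1 + a3*p.2.2 = N)).card := by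
  unfold repCount
  apply Finset.card_nbij' (fun x : Fin 3 → Fin (N+1) => ((x 0 : ℕ), (x 1 : ℕ), (x 2 : ℕ)))
    (fun p => ![⟨p.1 % (N+1), Nat.mod_lt _ (Nat.succ_pos N)⟩,
                ⟨p.2.1 % (N+1), Nat.mod_lt _ (Nat.succ_pos N)⟩,
                ⟨p.2.2 % (N+1), Nat.mod_lt _ (Nat.succ_pos N)⟩])
  · intro x hx
    simp only [Finset.mem_coe, Finset.mem_filter, Finset.mem_univ, true_and, Fin.sum_univ_three] at hx
    simp only [Finset.mem_coe, Finset.mem_filter, Finset.mem_product, Finset.mem_range]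
    refine ⟨⟨(x 0).is_lt, (x 1).is_lt, (x 2).is_lt⟩, ?_⟩
    simpa using hx
  · intro p hp
    simp only [Finset.mem_coe, Finset.mem_filter, Finset.mem_product, Finset.mem_range] at hp
    simp only [Finset.mem_coe, Finset.mem_filter, Finset.mem_univ, true_and, Fin.sum_univ_three]
    simp [Nat.mod_eq_of_lt hp.1.1, Nat.mod_eq_of_lt hp.1.2.1, Nat.mod_eq_of_lt hp.1.2.2]
    simpa using hp.2
  · intro x _
    funext i
    fin_cases i <;> simp [Nat.mod_eq_of_lt (Fin.is_lt _)]
  · intro p hp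
    simp only [Finset.mem_coe, Finset.mem_filter, Finset.mem_product, Finset.mem_range] at hp
    simp [Nat.mod_eq_of_lt hp.1.1, Nat.mod_eq_of_lt hp.1.2.1, Nat.mod_eq_of_lt hp.1.2.2]

lemma central (h r1 r2 : ℕ) (z : ℤ) (hr1 : r1 ≤ h) (hr2 : r2 ≤ 2*h+2)
    (x1 x2 x3 : ℕ)
    (he : (x1:ℤ)*((h:ℤ)*(2*h+1)) + (x2:ℤ)*(((h:ℤ)+1)*(2*h+1)) + (x3:ℤ)*(((h:ℤ)+1)*(2*h+3))
        = (r1:ℤ)*((h:ℤ)*(2*h+1)) + (r2:ℤ)*(((h:ℤ)+1)*(2*h+1)) + z*(((h:ℤ)+1)*(2*h+3))) :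
    ∃ q1 q : ℕ, (x1:ℤ) = r1 + ((h:ℤ)+1)*q1 ∧ (x2:ℤ) + (h:ℤ)*q1 = r2 + (2*(h:ℤ)+3)*q ∧
      (x3:ℤ) + (2*(h:ℤ)+1)*q = z := by
  have hH0 : (0:ℤ) ≤ (h:ℤ) := Int.natCast_nonneg h
  have hr1' : (r1:ℤ) ≤ (h:ℤ) := by exact_mod_cast hr1
  have hr2' : (r2:ℤ) ≤ 2*(h:ℤ)+2 := by exact_mod_cast hr2
  have hx1 : (0:ℤ) ≤ (x1:ℤ) := Int.natCast_nonneg _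
  have hx2 : (0:ℤ) ≤ (x2:ℤ) := Int.natCast_nonneg _
  obtain ⟨q1', hq1'⟩ : ∃ q1' : ℤ, (x1:ℤ) - r1 = ((h:ℤ)+1)*q1' := by
    refine ⟨-(((x2:ℤ)-r2)*(2*(h:ℤ)+1)+((x3:ℤ)-z)*(2*(h:ℤ)+3)) - (2*(h:ℤ)-1)*((x1:ℤ)-r1), ?_⟩
    linear_combination he
  have key : (q1'*(h:ℤ) + ((x2:ℤ)-r2))*(2*(h:ℤ)+1) + ((x3:ℤ)-z)*(2*(h:ℤ)+3) = 0 := by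
    have h1 : ((h:ℤ)+1) * ((q1'*(h:ℤ) + ((x2:ℤ)-r2))*(2*(h:ℤ)+1) + ((x3:ℤ)-z)*(2*(h:ℤ)+3)) = 0 := by
      linear_combination he - ((h:ℤ)*(2*(h:ℤ)+1)) * hq1'
    have h2 : ((h:ℤ))+1 ≠ 0 := by omega
    exact (mul_eq_zero.mp h1).resolve_left h2
  obtain ⟨q', hq'⟩ : ∃ q' : ℤ, (x3:ℤ) - z = -((2*(h:ℤ)+1)*q') := by
    refine ⟨-(((h:ℤ)+1)*(-(q1'*(h:ℤ)+((x2:ℤ)-r2))-((x3:ℤ)-z)) - ((x3:ℤ)-z)), ?_⟩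
    linear_combination ((h:ℤ)+1) * key
  have hveq : q1'*(h:ℤ) + ((x2:ℤ)-r2) = q'*(2*(h:ℤ)+3) := by
    have h1 : (2*(h:ℤ)+1) * ((q1'*(h:ℤ) + ((x2:ℤ)-r2)) - q'*(2*(h:ℤ)+3)) = 0 := by
      linear_combination key - (2*(h:ℤ)+3) * hq'
    have h2 : 2*(h:ℤ)+1 ≠ 0 := by omega
    have h3 := (mul_eq_zero.mp h1).resolve_left h2
    linarith
  have hq1pos : 0 ≤ q1' := by
    by_contra hc
    push_neg at hc
    have h4 : ((h:ℤ)+1)*q1' ≤ -((h:ℤ)+1) := by nlinarith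
    linarith [hq1']
  have hqpos : 0 ≤ q' := by
    by_contra hc
    push_neg at hc
    have h2 : q'*(2*(h:ℤ)+3) ≤ -(2*(h:ℤ)+3) := by nlinarith
    have h3 : 0 ≤ q1'*(h:ℤ) := mul_nonneg hq1pos hH0
    linarith [hveq]
  refine ⟨q1'.toNat, q'.toNat, ?_, ?_, ?_⟩
  · rw [Int.toNat_of_nonneg hq1pos]; linarith [hq1']
  · rw [Int.toNat_of_nonneg hq1pos, Int.toNat_of_nonneg hqpos]; linarith [hveq]
  · rw [Int.toNat_of_nonneg hqpos]; linarith [hq']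


lemma repCount_formula (h r1 r2 z : ℕ) (hh : 1 ≤ h) (hr1 : r1 ≤ h) (hr2 : r2 ≤ 2*h+2) :
    repCount ![h*(2*h+1), (h+1)*(2*h+1), (h+1)*(2*h+3)]
      (r1*(h*(2*h+1)) + r2*((h+1)*(2*h+1)) + z*((h+1)*(2*h+3)))
    = ∑ q ∈ Finset.range (z/(2*h+1)+1), ((r2+(2*h+3)*q)/h + 1) := by
  set N : ℕ := r1*(h*(2*h+1)) + r2*((h+1)*(2*h+1)) + z*((h+1)*(2*h+3)) with hN
  have hsigma : ∑ q ∈ Finset.range (z/(2*h+1)+1), ((r2+(2*h+3)*q)/h + 1)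
      = ((Finset.range (z/(2*h+1)+1)).sigma (fun q => Finset.range ((r2+(2*h+3)*q)/h+1))).card := by
    rw [Finset.card_sigma]; simp
  rw [repCount_triple, hsigma]
  have hpos1 : 0 < 2*h+1 := by omega
  have key : ∀ p : ℕ×ℕ×ℕ, h*(2*h+1)*p.1 + (h+1)*(2*h+1)*p.2.1 + (h+1)*(2*h+3)*p.2.2 = N →
      ∃ q1 q : ℕ, p.1 = r1+(h+1)*q1 ∧ p.2.1 + h*q1 = r2+(2*h+3)*q ∧ p.2.2+(2*h+1)*q = z := by
    intro p hp
    have he : (p.1:ℤ)*((h:ℤ)*(2*h+1)) + (p.2.1:ℤ)*(((h:ℤ)+1)*(2*h+1)) + (p.2.2:ℤ)*(((h:ℤ)+1)*(2*h+3))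
        = (r1:ℤ)*((h:ℤ)*(2*h+1)) + (r2:ℤ)*(((h:ℤ)+1)*(2*h+1)) + (z:ℤ)*(((h:ℤ)+1)*(2*h+3)) := by
      have := hp
      rw [hN] at this
      have hz := congrArg (Nat.cast : ℕ → ℤ) this
      push_cast at hz
      linear_combination hz
    obtain ⟨q1, q, e1, e2, e3⟩ := central h r1 r2 (z:ℤ) hr1 hr2 p.1 p.2.1 p.2.2 he
    refine ⟨q1, q, ?_, ?_, ?_⟩ <;> [skip; skip; skip]
    · exact_mod_cast e1
    · exact_mod_cast e2
    · exact_mod_cast e3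
  apply Finset.card_nbij'
    (i := fun p : ℕ×ℕ×ℕ => (⟨(z - p.2.2)/(2*h+1), (p.1 - r1)/(h+1)⟩ : Σ _ : ℕ, ℕ))
    (j := fun qp : Σ _ : ℕ, ℕ => (r1+(h+1)*qp.2, r2+(2*h+3)*qp.1 - h*qp.2, z - (2*h+1)*qp.1))
  · intro p hp
    simp only [Finset.mem_coe, Finset.mem_filter, Finset.mem_product, Finset.mem_range] at hp
    obtain ⟨q1, q, e1, e2, e3⟩ := key p hp.2
    have d1 : (z - p.2.2)/(2*h+1) = q := by
      have : z - p.2.2 = (2*h+1)*q := by omega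
      rw [this, Nat.mul_div_cancel_left _ hpos1]
    have d2 : (p.1 - r1)/(h+1) = q1 := by
      have : p.1 - r1 = (h+1)*q1 := by omega
      rw [this, Nat.mul_div_cancel_left _ (by omega)]
    rw [Finset.mem_coe, Finset.mem_sigma]
    dsimp only
    rw [d1, d2]
    constructor
    · rw [Finset.mem_range, Nat.lt_succ_iff, Nat.le_div_iff_mul_le hpos1, mul_comm]
      omega
    · rw [Finset.mem_range, Nat.lt_succ_iff, Nat.le_div_iff_mul_le hh, mul_comm]
      omega
  · rintro ⟨q, q1⟩ hqp
    rw [Finset.mem_coe, Finset.mem_sigma] at hqp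
    simp only [Finset.mem_range, Nat.lt_succ_iff] at hqp
    obtain ⟨hq, hq1⟩ := hqp
    rw [Nat.le_div_iff_mul_le hpos1] at hq
    rw [Nat.le_div_iff_mul_le hh] at hq1
    have hq' : (2*h+1)*q ≤ z := by rwa [mul_comm] at hq
    have hq1' : h*q1 ≤ r2+(2*h+3)*q := by rwa [mul_comm] at hq1
    dsimp only
    have hsum : h*(2*h+1)*(r1+(h+1)*q1) + (h+1)*(2*h+1)*(r2+(2*h+3)*q - h*q1)
        + (h+1)*(2*h+3)*(z - (2*h+1)*q) = N := by
      zify [hq', hq1']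
      rw [hN]
      push_cast
      ring
    simp only [Finset.mem_coe, Finset.mem_filter, Finset.mem_product, Finset.mem_range]
    refine ⟨⟨?_, ?_, ?_⟩, hsum⟩
    · have h1 : r1+(h+1)*q1 ≤ h*(2*h+1)*(r1+(h+1)*q1) := Nat.le_mul_of_pos_left _ (by positivity)
      omega
    · have h1 : r2+(2*h+3)*q - h*q1 ≤ (h+1)*(2*h+1)*(r2+(2*h+3)*q - h*q1) :=
        Nat.le_mul_of_pos_left _ (by positivity)
      omega
    · have h1 : z - (2*h+1)*q ≤ (h+1)*(2*h+3)*(z - (2*h+1)*q) :=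
        Nat.le_mul_of_pos_left _ (by positivity)
      omega
  · intro p hp
    simp only [Finset.mem_coe, Finset.mem_filter, Finset.mem_product, Finset.mem_range] at hp
    obtain ⟨q1, q, e1, e2, e3⟩ := key p hp.2
    have d1 : (z - p.2.2)/(2*h+1) = q := by
      have : z - p.2.2 = (2*h+1)*q := by omega
      rw [this, Nat.mul_div_cancel_left _ hpos1]
    have d2 : (p.1 - r1)/(h+1) = q1 := by
      have : p.1 - r1 = (h+1)*q1 := by omega
      rw [this, Nat.mul_div_cancel_left _ (by omega)]
    simp only [d1, d2]
    have c1 : r1+(h+1)*q1 = p.1 := e1.symm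
    have c2 : r2+(2*h+3)*q - h*q1 = p.2.1 := by omega
    have c3 : z - (2*h+1)*q = p.2.2 := by omega
    rw [c1, c2, c3]
  · rintro ⟨q, q1⟩ hqp
    rw [Finset.mem_coe, Finset.mem_sigma] at hqp
    simp only [Finset.mem_range, Nat.lt_succ_iff] at hqp
    obtain ⟨hq, hq1⟩ := hqp
    rw [Nat.le_div_iff_mul_le hpos1] at hq
    rw [Nat.le_div_iff_mul_le hh] at hq1
    have hq' : (2*h+1)*q ≤ z := by rwa [mul_comm] at hq
    have hq1' : h*q1 ≤ r2+(2*h+3)*q := by rwa [mul_comm] at hq1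
    dsimp only
    have d1 : (z - (z - (2*h+1)*q))/(2*h+1) = q := by
      have : z - (z - (2*h+1)*q) = (2*h+1)*q := by omega
      rw [this, Nat.mul_div_cancel_left _ hpos1]
    have d2 : (r1+(h+1)*q1 - r1)/(h+1) = q1 := by
      have : r1+(h+1)*q1 - r1 = (h+1)*q1 := by omega
      rw [this, Nat.mul_div_cancel_left _ (by omega)]
    simp only [d1, d2]


-- sum of 2q+1 equals m*m
lemma sum_sq (m : ℕ) : ∑ q ∈ Finset.range m, (2*q+1) = m*m := by
  have := sum_base m 0
  simpa using this

lemma ubA (h k i j r2 m : ℕ) (hij : i + j = k) (hh : 3*k ≤ h+2) (hh1 : 1 ≤ h)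
    (hr2 : r2 ≤ 2*h+2)
    (hsum : ∑ q ∈ Finset.range m, ((r2+(2*h+3)*q)/h + 1) ≤ k*(k+1)+i) :
    r2 + (2*h+3)*m ≤ (2*k+2)*h+3*i+2 := by
  have ekk : k*(k+1) = k*k+k := by ring
  have hterm : ∀ q ∈ Finset.range m, 2*q+1 ≤ (r2+(2*h+3)*q)/h + 1 := by
    intro q _
    have h1 : (2*q)*h ≤ r2+(2*h+3)*q := by
      have e1 : (2*q)*h = 2*(h*q) := by ring
      have e2 : (2*h+3)*q = 2*(h*q)+3*q := by ring
      omega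
    have := (Nat.le_div_iff_mul_le hh1).mpr h1
    omega
  have hm2 : m*m ≤ k*(k+1)+i := by
    calc m*m = ∑ q ∈ Finset.range m, (2*q+1) := (sum_sq m).symm
    _ ≤ ∑ q ∈ Finset.range m, ((r2+(2*h+3)*q)/h + 1) := Finset.sum_le_sum hterm
    _ ≤ k*(k+1)+i := hsum
  have hmk : m ≤ k := by
    by_contra hc
    push_neg at hc
    have h1 : (k+1)*(k+1) ≤ m*m := Nat.mul_le_mul hc hc
    have e1 : (k+1)*(k+1) = k*k+2*k+1 := by ring
    omega
  by_cases hmk1 : m + 1 ≤ k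
  · have e1 : (2*h+3)*(m+1) ≤ (2*h+3)*k := Nat.mul_le_mul_left _ hmk1
    have e2 : (2*h+3)*(m+1) = (2*h+3)*m + 2*h+3 := by ring
    have e3 : (2*h+3)*k = 2*(h*k)+3*k := by ring
    have e4 : (2*k+2)*h = 2*(h*k)+2*h := by ring
    omega
  · have hm : m = k := by omega
    subst hm
    by_contra hcon
    push_neg at hcon
    have e3 : (2*h+3)*m = 2*(h*m)+3*m := by ring
    have e4 : (2*m+2)*h = 2*(h*m)+2*h := by ring
    have hr2' : 2*h+3 ≤ r2 + 3*j := by omega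
    have hj1 : 1 ≤ j := by omega
    obtain ⟨j', rfl⟩ : ∃ j', j = j'+1 := ⟨j-1, by omega⟩
    have hterm2 : ∀ q ∈ Finset.range m, 2*q+1+(if q < j' then 1 else 2) ≤ (r2+(2*h+3)*q)/h + 1 := by
      intro q hq
      rw [Finset.mem_range] at hq
      have e2 : (2*h+3)*q = 2*(h*q)+3*q := by ring
      by_cases hqj : q < j'
      · rw [if_pos hqj]
        have h1 : (2*q+1)*h ≤ r2+(2*h+3)*q := by
          have e1 : (2*q+1)*h = 2*(h*q)+h := by ring
          omega
        have := (Nat.le_div_iff_mul_le hh1).mpr h1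
        omega
      · rw [if_neg hqj]
        have h1 : (2*q+2)*h ≤ r2+(2*h+3)*q := by
          have e1 : (2*q+2)*h = 2*(h*q)+2*h := by ring
          omega
        have := (Nat.le_div_iff_mul_le hh1).mpr h1
        omega
    have hlow := Finset.sum_le_sum hterm2
    rw [sum_split m j' 1 2 (by omega)] at hlow
    have ej : j'*j' + j'*2 ≤ j'*j' + j'*1 + (m*m+m*2) := by omega
    omega


lemma ubB (h k i w r2 m : ℕ) (hiw : i + w = 2*k+1) (hw : w ≤ k) (hh : 3*k+1 ≤ h)
    (hr2 : r2 ≤ 2*h+2)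
    (hsum : ∑ q ∈ Finset.range m, ((r2+(2*h+3)*q)/h + 1) ≤ k*(k+1)+i) :
    r2 + (2*h+3)*m + 3*w ≤ (2*k+3)*h+3*k+2 := by
  have hh1 : 1 ≤ h := by omega
  have ekk : k*(k+1) = k*k+k := by ring
  have hterm : ∀ q ∈ Finset.range m, 2*q+1 ≤ (r2+(2*h+3)*q)/h + 1 := by
    intro q _
    have h1 : (2*q)*h ≤ r2+(2*h+3)*q := by
      have e1 : (2*q)*h = 2*(h*q) := by ring
      have e2 : (2*h+3)*q = 2*(h*q)+3*q := by ring
      omega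
    have := (Nat.le_div_iff_mul_le hh1).mpr h1
    omega
  have hm2 : m*m ≤ k*(k+1)+i := by
    calc m*m = ∑ q ∈ Finset.range m, (2*q+1) := (sum_sq m).symm
    _ ≤ ∑ q ∈ Finset.range m, ((r2+(2*h+3)*q)/h + 1) := Finset.sum_le_sum hterm
    _ ≤ k*(k+1)+i := hsum
  have hmk : m ≤ k+1 := by
    by_contra hc
    push_neg at hc
    have h1 : (k+2)*(k+2) ≤ m*m := Nat.mul_le_mul hc hc
    have e1 : (k+2)*(k+2) = k*k+4*k+4 := by ring
    omega
  by_cases hmk1 : m ≤ k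
  · have e1 : (2*h+3)*m ≤ (2*h+3)*k := Nat.mul_le_mul_left _ hmk1
    have e3 : (2*h+3)*k = 2*(h*k)+3*k := by ring
    have e4 : (2*k+3)*h = 2*(h*k)+3*h := by ring
    omega
  · have hm : m = k+1 := by omega
    subst hm
    by_contra hcon
    push_neg at hcon
    have e3 : (2*h+3)*(k+1) = 2*(h*k)+2*h+3*k+3 := by ring
    have e4 : (2*k+3)*h = 2*(h*k)+3*h := by ring
    have hr2' : h ≤ r2 + 3*w := by omega
    have hterm2 : ∀ q ∈ Finset.range (k+1), 2*q+1+(if q < w then 0 else 1) ≤ (r2+(2*h+3)*q)/h + 1 := by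
      intro q hq
      rw [Finset.mem_range] at hq
      have e2 : (2*h+3)*q = 2*(h*q)+3*q := by ring
      by_cases hqw : q < w
      · rw [if_pos hqw]
        exact hterm q (by rw [Finset.mem_range]; omega)
      · rw [if_neg hqw]
        have h1 : (2*q+1)*h ≤ r2+(2*h+3)*q := by
          have e1 : (2*q+1)*h = 2*(h*q)+h := by ring
          omega
        have := (Nat.le_div_iff_mul_le hh1).mpr h1
        omega
    have hlow := Finset.sum_le_sum hterm2
    rw [sum_split (k+1) w 0 1 (by omega)] at hlow
    have hval : w*w+w*0+((k+1)*(k+1)+(k+1)*1) - (w*w+w*1)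
        = (k+1)*(k+1)+(k+1)-w := by omega
    rw [hval] at hlow
    have e5 : (k+1)*(k+1) = k*k+2*k+1 := by ring
    omega

lemma exactA (h k i j : ℕ) (hij : i+j = k) (hh : 3*k ≤ h+2) (hh1 : 1 ≤ h)
    (hj0 : j = 0 → 3*k+1 ≤ h) :
    ∑ q ∈ Finset.range k, ((2*h+2-3*j + (2*h+3)*q)/h + 1) = k*(k+1)+i := by
  have h3j : 3*j ≤ h+2 := by omega
  have hcg : ∀ q ∈ Finset.range k, ((2*h+2-3*j + (2*h+3)*q)/h + 1) = 2*q+1+(if q < j then 1 else 2) := by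
    intro q hq
    rw [Finset.mem_range] at hq
    have e2 : (2*h+3)*q = 2*(h*q)+3*q := by ring
    by_cases hqj : q < j
    · rw [if_pos hqj]
      have hd : (2*h+2-3*j + (2*h+3)*q)/h = 2*q+1 := by
        apply Nat.div_eq_of_lt_le
        · have e1 : (2*q+1)*h = 2*(h*q)+h := by ring
          omega
        · have e1 : (2*q+1+1)*h = 2*(h*q)+2*h := by ring
          omega
      omega
    · rw [if_neg hqj]
      have hd : (2*h+2-3*j + (2*h+3)*q)/h = 2*q+2 := by
        apply Nat.div_eq_of_lt_le
        · have e1 : (2*q+2)*h = 2*(h*q)+2*h := by ring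
          omega
        · have e1 : (2*q+2+1)*h = 2*(h*q)+3*h := by ring
          -- need 2h+2-3j+3q < h+... i.e. 2+3(q-j) < h; q ≤ k-1
          rcases Nat.eq_zero_or_pos j with hj | hj
          · have := hj0 hj
            omega
          · omega
      omega
  rw [Finset.sum_congr rfl hcg, sum_split k j 1 2 (by omega)]
  have e1 : k*(k+1) = k*k+k := by ring
  have e2 : j*j + j*2 ≤ j*j+j*1+(k*k+k*2) := by omega
  omega

lemma exactB (h k i w : ℕ) (hiw : i+w = 2*k+1) (hw : w ≤ k) (hh : 3*k+1 ≤ h) :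
    ∑ q ∈ Finset.range (k+1), ((h-3*w-1 + (2*h+3)*q)/h + 1) = k*(k+1)+i := by
  have hh1 : 1 ≤ h := by omega
  have hcg : ∀ q ∈ Finset.range (k+1), ((h-3*w-1 + (2*h+3)*q)/h + 1) = 2*q+1+(if q < w+1 then 0 else 1) := by
    intro q hq
    rw [Finset.mem_range] at hq
    have e2 : (2*h+3)*q = 2*(h*q)+3*q := by ring
    by_cases hqw : q < w+1
    · rw [if_pos hqw]
      have hd : (h-3*w-1 + (2*h+3)*q)/h = 2*q := by
        apply Nat.div_eq_of_lt_le
        · have e1 : (2*q)*h = 2*(h*q) := by ring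
          omega
        · have e1 : (2*q+1)*h = 2*(h*q)+h := by ring
          omega
      omega
    · rw [if_neg hqw]
      have hd : (h-3*w-1 + (2*h+3)*q)/h = 2*q+1 := by
        apply Nat.div_eq_of_lt_le
        · have e1 : (2*q+1)*h = 2*(h*q)+h := by ring
          omega
        · have e1 : (2*q+1+1)*h = 2*(h*q)+2*h := by ring
          omega
      omega
  rw [Finset.sum_congr rfl hcg, sum_split (k+1) (w+1) 0 1 (by omega)]
  have e1 : k*(k+1) = k*k+k := by ring
  have e2 : (k+1)*(k+1) = k*k+2*k+1 := by ring
  have e3 : (w+1)*(w+1) + (w+1)*1 ≤ (w+1)*(w+1)+(w+1)*0+((k+1)*(k+1)+(k+1)*1) := by omega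
  omega


lemma decomp (h : ℕ) (hh1 : 1 ≤ h) (N : ℤ) :
    ∃ (r1 r2 : ℕ) (zz : ℤ), r1 ≤ h ∧ r2 ≤ 2*h+2 ∧
      N = (r1:ℤ)*((h:ℤ)*(2*(h:ℤ)+1)) + (r2:ℤ)*(((h:ℤ)+1)*(2*(h:ℤ)+1)) + zz*(((h:ℤ)+1)*(2*(h:ℤ)+3)) := by
  have hH1 : (1:ℤ) ≤ (h:ℤ) := by exact_mod_cast hh1
  have hne1 : ((h:ℤ)+1) ≠ 0 := by omega
  have hne2 : (2*(h:ℤ)+3) ≠ 0 := by omega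
  have hR1nn : 0 ≤ N % ((h:ℤ)+1) := Int.emod_nonneg N hne1
  have hR1lt : N % ((h:ℤ)+1) < (h:ℤ)+1 := Int.emod_lt_of_pos N (by omega)
  have d1 : ((h:ℤ)+1) ∣ (N - (N % ((h:ℤ)+1))*((h:ℤ)*(2*(h:ℤ)+1))) := by
    have e : N - (N % ((h:ℤ)+1))*((h:ℤ)*(2*(h:ℤ)+1))
        = (N - N % ((h:ℤ)+1)) - (N % ((h:ℤ)+1))*(((h:ℤ)+1)*(2*(h:ℤ)-1)) := by ring
    rw [e]
    refine dvd_sub ?_ ⟨(N % ((h:ℤ)+1))*(2*(h:ℤ)-1), by ring⟩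
    have h2 := Int.emod_add_mul_ediv N ((h:ℤ)+1)
    exact ⟨N / ((h:ℤ)+1), by omega⟩
  obtain ⟨N2, hN2⟩ := d1
  have hR2nn : 0 ≤ (N2*((h:ℤ)+1)) % (2*(h:ℤ)+3) := Int.emod_nonneg _ hne2
  have hR2lt : (N2*((h:ℤ)+1)) % (2*(h:ℤ)+3) < 2*(h:ℤ)+3 := Int.emod_lt_of_pos _ (by omega)
  set R2 : ℤ := (N2*((h:ℤ)+1)) % (2*(h:ℤ)+3) with hR2def
  have d2 : (2*(h:ℤ)+3) ∣ (N2 - R2*(2*(h:ℤ)+1)) := by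
    have hK : N2*((h:ℤ)+1) - R2 = (2*(h:ℤ)+3)*((N2*((h:ℤ)+1))/(2*(h:ℤ)+3)) := by
      have h2 := Int.emod_add_mul_ediv (N2*((h:ℤ)+1)) (2*(h:ℤ)+3)
      omega
    exact ⟨(2*(h:ℤ)+1)*((N2*((h:ℤ)+1))/(2*(h:ℤ)+3)) - N2*(h:ℤ), by linear_combination (2*(h:ℤ)+1)*hK⟩
  obtain ⟨ZZ, hZZ⟩ := d2
  refine ⟨(N % ((h:ℤ)+1)).toNat, R2.toNat, ZZ, by omega, by omega, ?_⟩
  rw [Int.toNat_of_nonneg hR1nn, Int.toNat_of_nonneg hR2nn]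
  linear_combination hN2 + ((h:ℤ)+1)*hZZ


lemma repCountZ_natCast {kk : ℕ} (a : Fin kk → ℕ) (m : ℕ) :
    repCountZ a ((m:ℕ):ℤ) = repCount a m := by
  simp [repCountZ]

set_option maxHeartbeats 2000000 in
lemma greatestB (h k i w : ℕ) (hiw : i + w = 2*k+1) (hw : w ≤ k) (hh : 3*k+1 ≤ h) :
    IsGreatest {m : ℤ | repCountZ ![h*(2*h+1), (h+1)*(2*h+1), (h+1)*(2*h+3)] m ≤ k*(k+1)+i}
      ((((2*k+4)*h+3*k-3*w : ℕ) : ℤ) * (((h:ℤ)+1)*(2*(h:ℤ)+1)) - 1) := by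
  have hh1 : 1 ≤ h := by omega
  have e0 : (2*k+4)*h = 2*(k*h)+4*h := by ring
  have hMvZ : (((2*k+4)*h+3*k-3*w : ℕ) : ℤ) = (2*(k:ℤ)+4)*(h:ℤ)+3*(k:ℤ)-3*(w:ℤ) := by
    push_cast [show 3*w ≤ (2*k+4)*h+3*k by omega]
    ring
  have ha2nn : (0:ℤ) ≤ ((h:ℤ)+1)*(2*(h:ℤ)+1) := by positivity
  have hhZ : (1:ℤ) ≤ (h:ℤ) := by exact_mod_cast hh1
  have hwZ : (w:ℤ) ≤ k := by exact_mod_cast hw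
  have hkZ : (0:ℤ) ≤ (k:ℤ) := Int.natCast_nonneg k
  have hMv3h : 3*(h:ℤ) ≤ (((2*k+4)*h+3*k-3*w : ℕ) : ℤ) := by
    rw [hMvZ]; nlinarith
  constructor
  · show repCountZ _ _ ≤ k*(k+1)+i
    have hz1 : 1 ≤ (k+1)*(2*h+1) := by
      have h1 : (k+1) ≠ 0 := by omega
      have h2 : (2*h+1) ≠ 0 := by omega
      exact Nat.one_le_iff_ne_zero.mpr (Nat.mul_ne_zero h1 h2)
    have hMge : 1 ≤ ((2*k+4)*h+3*k-3*w) * ((h+1)*(2*h+1)) := by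
      have h1 : ((2*k+4)*h+3*k-3*w) ≠ 0 := by omega
      have h2 : ((h+1)*(2*h+1)) ≠ 0 := by
        have h3 : (h+1) ≠ 0 := by omega
        have h4 : (2*h+1) ≠ 0 := by omega
        exact Nat.mul_ne_zero h3 h4
      exact Nat.one_le_iff_ne_zero.mpr (Nat.mul_ne_zero h1 h2)
    have hgid : ((2*k+4)*h+3*k-3*w) * ((h+1)*(2*h+1)) - 1
        = h*(h*(2*h+1)) + (h-3*w-1)*((h+1)*(2*h+1)) + ((k+1)*(2*h+1)-1)*((h+1)*(2*h+3)) := by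
      zify [show 3*w ≤ h by omega, show 1 ≤ h-3*w by omega, hz1, hMge,
        show 3*w ≤ (2*k+4)*h+3*k by omega]
      ring
    have hgcast : (((2*k+4)*h+3*k-3*w : ℕ) : ℤ) * (((h:ℤ)+1)*(2*(h:ℤ)+1)) - 1
        = ((h*(h*(2*h+1)) + (h-3*w-1)*((h+1)*(2*h+1)) + ((k+1)*(2*h+1)-1)*((h+1)*(2*h+3)) : ℕ) : ℤ) := by
      rw [← hgid]
      have : (1:ℤ) ≤ (((2*k+4)*h+3*k-3*w : ℕ):ℤ) * (((h:ℤ)+1)*(2*(h:ℤ)+1)) := by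
        calc (1:ℤ) ≤ 3*(h:ℤ) := by linarith
        _ ≤ _ := by nlinarith
      push_cast [hMge]
      ring
    rw [hgcast, repCountZ_natCast]
    rw [repCount_formula h h (h-3*w-1) ((k+1)*(2*h+1)-1) hh1 le_rfl (by omega)]
    have hdiv : ((k+1)*(2*h+1)-1)/(2*h+1) = k := by
      have e2 : (k+1)*(2*h+1) = k*(2*h+1)+2*h+1 := by ring
      apply Nat.div_eq_of_lt_le
      · omega
      · omega
    rw [hdiv, exactB h k i w hiw hw hh]
  · intro N hN
    simp only [Set.mem_setOf_eq] at hN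
    rcases lt_or_ge N 0 with h0 | h0
    · have h1 : (1:ℤ) ≤ (((2*k+4)*h+3*k-3*w : ℕ) : ℤ) * (((h:ℤ)+1)*(2*(h:ℤ)+1)) := by
        calc (1:ℤ) ≤ 3*(h:ℤ) := by linarith
        _ ≤ _ := by nlinarith
      linarith
    · obtain ⟨r1, r2, zz, hr1, hr2, hdec⟩ := decomp h hh1 N
      have hr1Z : (r1:ℤ) ≤ h := by exact_mod_cast hr1
      have hr2Z : (r2:ℤ) ≤ 2*(h:ℤ)+2 := by exact_mod_cast hr2
      have ha1nn : (0:ℤ) ≤ (h:ℤ)*(2*(h:ℤ)+1) := by positivity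
      have ha3pos : (0:ℤ) < ((h:ℤ)+1)*(2*(h:ℤ)+3) := by positivity
      rcases lt_or_ge zz 0 with hzneg | hznn
      · have c1 : (r1:ℤ)*((h:ℤ)*(2*(h:ℤ)+1)) ≤ (h:ℤ)*((h:ℤ)*(2*(h:ℤ)+1)) :=
          mul_le_mul_of_nonneg_right hr1Z ha1nn
        have c2 : (r2:ℤ)*(((h:ℤ)+1)*(2*(h:ℤ)+1)) ≤ (2*(h:ℤ)+2)*(((h:ℤ)+1)*(2*(h:ℤ)+1)) :=
          mul_le_mul_of_nonneg_right hr2Z ha2nn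
        have c3 : zz*(((h:ℤ)+1)*(2*(h:ℤ)+3)) ≤ -(((h:ℤ)+1)*(2*(h:ℤ)+3)) := by
          have hz1 : zz ≤ -1 := by omega
          nlinarith
        have c4 : 3*(h:ℤ)*(((h:ℤ)+1)*(2*(h:ℤ)+1))
            ≤ (((2*k+4)*h+3*k-3*w : ℕ) : ℤ)*(((h:ℤ)+1)*(2*(h:ℤ)+1)) :=
          mul_le_mul_of_nonneg_right hMv3h ha2nn
        have idz : (h:ℤ)*((h:ℤ)*(2*(h:ℤ)+1)) + (2*(h:ℤ)+2)*(((h:ℤ)+1)*(2*(h:ℤ)+1))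
            - (((h:ℤ)+1)*(2*(h:ℤ)+3)) = 3*(h:ℤ)*(((h:ℤ)+1)*(2*(h:ℤ)+1)) - 1 := by ring
        linarith [hdec, c1, c2, c3, c4, idz]
      · set zn := zz.toNat with hzn
        have hzzc : zz = (zn:ℤ) := (Int.toNat_of_nonneg hznn).symm
        have hNc : N = ((r1*(h*(2*h+1)) + r2*((h+1)*(2*h+1)) + zn*((h+1)*(2*h+3)) : ℕ) : ℤ) := by
          rw [hdec, hzzc]; push_cast; ring
        have hrc : repCountZ ![h*(2*h+1), (h+1)*(2*h+1), (h+1)*(2*h+3)] N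
            = ∑ q ∈ Finset.range (zn/(2*h+1)+1), ((r2+(2*h+3)*q)/h + 1) := by
          rw [hNc, repCountZ_natCast, repCount_formula h r1 r2 zn hh1 hr1 hr2]
        rw [hrc] at hN
        have hub := ubB h k i w r2 (zn/(2*h+1)+1) hiw hw hh hr2 hN
        have hzlt : zn < (zn/(2*h+1)+1)*(2*h+1) := by
          have h1 := Nat.div_add_mod zn (2*h+1)
          have h2 : zn % (2*h+1) < 2*h+1 := Nat.mod_lt _ (by omega)
          have e : (zn/(2*h+1)+1)*(2*h+1) = (2*h+1)*(zn/(2*h+1)) + (2*h+1) := by ring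
          omega
        -- work in ℕ
        have claim1 : r1*(h*(2*h+1)) + r2*((h+1)*(2*h+1)) + zn*((h+1)*(2*h+3))
            ≤ h*(h*(2*h+1)) + r2*((h+1)*(2*h+1))
              + ((zn/(2*h+1)+1)*(2*h+1)-1)*((h+1)*(2*h+3)) := by
          have c1 : r1*(h*(2*h+1)) ≤ h*(h*(2*h+1)) := Nat.mul_le_mul_right _ hr1
          have c3 : zn*((h+1)*(2*h+3)) ≤ ((zn/(2*h+1)+1)*(2*h+1)-1)*((h+1)*(2*h+3)) :=
            Nat.mul_le_mul_right _ (by omega)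
          omega
        have claim2 : h*(h*(2*h+1)) + r2*((h+1)*(2*h+1))
              + ((zn/(2*h+1)+1)*(2*h+1)-1)*((h+1)*(2*h+3)) + 1 + 2*((h+1)*(2*h+1))
            = (h+r2+(2*h+3)*(zn/(2*h+1)+1))*((h+1)*(2*h+1)) := by
          zify [show 1 ≤ (zn/(2*h+1)+1)*(2*h+1) by omega]
          ring
        have hcoef : h+r2+(2*h+3)*(zn/(2*h+1)+1) ≤ ((2*k+4)*h+3*k-3*w) + 2 := by
          have e1 : (2*k+4)*h = (2*k+3)*h + h := by ring
          omega
        have claim3 : (h+r2+(2*h+3)*(zn/(2*h+1)+1))*((h+1)*(2*h+1))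
            ≤ (((2*k+4)*h+3*k-3*w) + 2)*((h+1)*(2*h+1)) := Nat.mul_le_mul_right _ hcoef
        have e2 : (((2*k+4)*h+3*k-3*w) + 2)*((h+1)*(2*h+1))
            = ((2*k+4)*h+3*k-3*w)*((h+1)*(2*h+1)) + 2*((h+1)*(2*h+1)) := by ring
        have hfin : r1*(h*(2*h+1)) + r2*((h+1)*(2*h+1)) + zn*((h+1)*(2*h+3))
            ≤ ((2*k+4)*h+3*k-3*w)*((h+1)*(2*h+1)) - 1 := by omega
        rw [hNc]
        have hcast : (((((2*k+4)*h+3*k-3*w)*((h+1)*(2*h+1)) - 1) : ℕ) : ℤ)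
            = (((2*k+4)*h+3*k-3*w : ℕ) : ℤ) * (((h:ℤ)+1)*(2*(h:ℤ)+1)) - 1 := by
          have hMge : 1 ≤ ((2*k+4)*h+3*k-3*w) * ((h+1)*(2*h+1)) := by
            have h1 : ((2*k+4)*h+3*k-3*w) ≠ 0 := by omega
            have h2 : ((h+1)*(2*h+1)) ≠ 0 := by
              exact Nat.mul_ne_zero (by omega) (by omega)
            exact Nat.one_le_iff_ne_zero.mpr (Nat.mul_ne_zero h1 h2)
          push_cast [hMge]
          ring
        rw [← hcast]
        exact_mod_cast hfin

set_option maxHeartbeats 2000000 in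
lemma greatestA (h k i j : ℕ) (hij : i + j = k) (hh : 3*k ≤ h+2) (hh1 : 1 ≤ h)
    (hj0 : j = 0 → 3*k+1 ≤ h) :
    IsGreatest {m : ℤ | repCountZ ![h*(2*h+1), (h+1)*(2*h+1), (h+1)*(2*h+3)] m ≤ k*(k+1)+i}
      ((((2*k+3)*h+3*i : ℕ) : ℤ) * (((h:ℤ)+1)*(2*(h:ℤ)+1)) - 1) := by
  have hMvZ : (((2*k+3)*h+3*i : ℕ) : ℤ) = (2*(k:ℤ)+3)*(h:ℤ)+3*(i:ℤ) := by push_cast; ring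
  have ha2nn : (0:ℤ) ≤ ((h:ℤ)+1)*(2*(h:ℤ)+1) := by positivity
  have hhZ : (1:ℤ) ≤ (h:ℤ) := by exact_mod_cast hh1
  have hiZ : (0:ℤ) ≤ (i:ℤ) := Int.natCast_nonneg i
  have hkZ : (0:ℤ) ≤ (k:ℤ) := Int.natCast_nonneg k
  have e0 : (2*k+3)*h = 2*(k*h)+3*h := by ring
  have hMv3h : 3*(h:ℤ) ≤ (((2*k+3)*h+3*i : ℕ) : ℤ) := by
    rw [hMvZ]; nlinarith
  have h3j : 3*j ≤ 2*h+2 := by omega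
  constructor
  · show repCountZ _ _ ≤ k*(k+1)+i
    have hMge : 1 ≤ ((2*k+3)*h+3*i) * ((h+1)*(2*h+1)) := by
      have h1 : ((2*k+3)*h+3*i) ≠ 0 := by omega
      have h2 : ((h+1)*(2*h+1)) ≠ 0 := Nat.mul_ne_zero (by omega) (by omega)
      exact Nat.one_le_iff_ne_zero.mpr (Nat.mul_ne_zero h1 h2)
    rcases Nat.eq_zero_or_pos k with hk0 | hk1
    · -- k = 0, hence i = j = 0, value has no representations
      have hi0 : i = 0 := by omega
      have hj00 : j = 0 := by omega
      subst hk0; subst hi0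
      have hgid : (((3:ℕ)*h : ℕ)) * ((h+1)*(2*h+1)) - 1
          = ((2*0+3)*h+3*0) * ((h+1)*(2*h+1)) - 1 := by norm_num
      have hge1 : 1 ≤ ((2*0+3)*h+3*0) * ((h+1)*(2*h+1)) := hMge
      have hcast : ((((2*0+3)*h+3*0 : ℕ)) : ℤ) * (((h:ℤ)+1)*(2*(h:ℤ)+1)) - 1
          = ((((2*0+3)*h+3*0) * ((h+1)*(2*h+1)) - 1 : ℕ) : ℤ) := by
        push_cast [hge1]
        ring
      rw [hcast, repCountZ_natCast]
      have hzero : repCount ![h*(2*h+1), (h+1)*(2*h+1), (h+1)*(2*h+3)]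
          (((2*0+3)*h+3*0) * ((h+1)*(2*h+1)) - 1) = 0 := by
        rw [repCount_triple, Finset.card_eq_zero, Finset.filter_eq_empty_iff]
        rintro p hp hsum
        have hcastN : ((((2*0+3)*h+3*0) * ((h+1)*(2*h+1)) - 1 : ℕ) : ℤ)
            = 3*(h:ℤ)*(((h:ℤ)+1)*(2*(h:ℤ)+1)) - 1 := by
          push_cast [hge1]; ring
        have he : (p.1:ℤ)*((h:ℤ)*(2*(h:ℤ)+1)) + (p.2.1:ℤ)*(((h:ℤ)+1)*(2*(h:ℤ)+1))
              + (p.2.2:ℤ)*(((h:ℤ)+1)*(2*(h:ℤ)+3))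
            = (h:ℤ)*((h:ℤ)*(2*(h:ℤ)+1)) + ((2*h+2 : ℕ):ℤ)*(((h:ℤ)+1)*(2*(h:ℤ)+1))
              + (-1)*(((h:ℤ)+1)*(2*(h:ℤ)+3)) := by
          have hz := congrArg (Nat.cast : ℕ → ℤ) hsum
          push_cast at hz
          rw [show ((((2*0+3)*h+3*0) * ((h+1)*(2*h+1)) - 1 : ℕ) : ℤ)
            = 3*(h:ℤ)*(((h:ℤ)+1)*(2*(h:ℤ)+1)) - 1 from hcastN] at hz
          push_cast
          linear_combination hz
        obtain ⟨q1, q, e1, e2, e3⟩ := central h h (2*h+2) (-1) le_rfl le_rfl p.1 p.2.1 p.2.2 he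
        have hq : (0:ℤ) ≤ (2*(h:ℤ)+1)*(q:ℕ) := by positivity
        have hx3 : (0:ℤ) ≤ (p.2.2:ℤ) := Int.natCast_nonneg _
        omega
      rw [hzero]
    · -- k ≥ 1
      have hsub1 : 3*j ≤ 2*h+2 := h3j
      have hz1 : 1 ≤ k*(2*h+1) := by
        have h2 : k*(2*h+1) ≠ 0 := Nat.mul_ne_zero (by omega) (by omega)
        omega
      have hgid : ((2*k+3)*h+3*i) * ((h+1)*(2*h+1)) - 1
          = h*(h*(2*h+1)) + (2*h+2-3*j)*((h+1)*(2*h+1)) + (k*(2*h+1)-1)*((h+1)*(2*h+3)) := by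
        zify [hsub1, hz1, hMge]
        have hijZ : (i:ℤ) + (j:ℤ) = (k:ℤ) := by exact_mod_cast hij
        linear_combination (3*(((h:ℤ)+1)*(2*(h:ℤ)+1))) * hijZ
      have hgcast : (((2*k+3)*h+3*i : ℕ) : ℤ) * (((h:ℤ)+1)*(2*(h:ℤ)+1)) - 1
          = ((h*(h*(2*h+1)) + (2*h+2-3*j)*((h+1)*(2*h+1)) + (k*(2*h+1)-1)*((h+1)*(2*h+3)) : ℕ) : ℤ) := by
        rw [← hgid]
        push_cast [hMge]
        ring
      rw [hgcast, repCountZ_natCast]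
      rw [repCount_formula h h (2*h+2-3*j) (k*(2*h+1)-1) hh1 le_rfl (by omega)]
      obtain ⟨k', rfl⟩ : ∃ k', k = k'+1 := ⟨k-1, by omega⟩
      have hdiv : ((k'+1)*(2*h+1)-1)/(2*h+1) = k' := by
        have e2 : (k'+1)*(2*h+1) = k'*(2*h+1)+2*h+1 := by ring
        apply Nat.div_eq_of_lt_le
        · omega
        · omega
      rw [hdiv]
      have := exactA h (k'+1) i j hij hh hh1 hj0
      omega
  · intro N hN
    simp only [Set.mem_setOf_eq] at hN
    rcases lt_or_ge N 0 with h0 | h0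
    · have h1 : (1:ℤ) ≤ (((2*k+3)*h+3*i : ℕ) : ℤ) * (((h:ℤ)+1)*(2*(h:ℤ)+1)) := by
        calc (1:ℤ) ≤ 3*(h:ℤ) := by linarith
        _ ≤ _ := by nlinarith
      linarith
    · obtain ⟨r1, r2, zz, hr1, hr2, hdec⟩ := decomp h hh1 N
      have hr1Z : (r1:ℤ) ≤ h := by exact_mod_cast hr1
      have hr2Z : (r2:ℤ) ≤ 2*(h:ℤ)+2 := by exact_mod_cast hr2
      have ha1nn : (0:ℤ) ≤ (h:ℤ)*(2*(h:ℤ)+1) := by positivity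
      have ha3pos : (0:ℤ) < ((h:ℤ)+1)*(2*(h:ℤ)+3) := by positivity
      rcases lt_or_ge zz 0 with hzneg | hznn
      · have c1 : (r1:ℤ)*((h:ℤ)*(2*(h:ℤ)+1)) ≤ (h:ℤ)*((h:ℤ)*(2*(h:ℤ)+1)) :=
          mul_le_mul_of_nonneg_right hr1Z ha1nn
        have c2 : (r2:ℤ)*(((h:ℤ)+1)*(2*(h:ℤ)+1)) ≤ (2*(h:ℤ)+2)*(((h:ℤ)+1)*(2*(h:ℤ)+1)) :=
          mul_le_mul_of_nonneg_right hr2Z ha2nn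
        have c3 : zz*(((h:ℤ)+1)*(2*(h:ℤ)+3)) ≤ -(((h:ℤ)+1)*(2*(h:ℤ)+3)) := by
          have hz1 : zz ≤ -1 := by omega
          nlinarith
        have c4 : 3*(h:ℤ)*(((h:ℤ)+1)*(2*(h:ℤ)+1))
            ≤ (((2*k+3)*h+3*i : ℕ) : ℤ)*(((h:ℤ)+1)*(2*(h:ℤ)+1)) :=
          mul_le_mul_of_nonneg_right hMv3h ha2nn
        have idz : (h:ℤ)*((h:ℤ)*(2*(h:ℤ)+1)) + (2*(h:ℤ)+2)*(((h:ℤ)+1)*(2*(h:ℤ)+1))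
            - (((h:ℤ)+1)*(2*(h:ℤ)+3)) = 3*(h:ℤ)*(((h:ℤ)+1)*(2*(h:ℤ)+1)) - 1 := by ring
        linarith [hdec, c1, c2, c3, c4, idz]
      · set zn := zz.toNat with hzn
        have hzzc : zz = (zn:ℤ) := (Int.toNat_of_nonneg hznn).symm
        have hNc : N = ((r1*(h*(2*h+1)) + r2*((h+1)*(2*h+1)) + zn*((h+1)*(2*h+3)) : ℕ) : ℤ) := by
          rw [hdec, hzzc]; push_cast; ring
        have hrc : repCountZ ![h*(2*h+1), (h+1)*(2*h+1), (h+1)*(2*h+3)] N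
            = ∑ q ∈ Finset.range (zn/(2*h+1)+1), ((r2+(2*h+3)*q)/h + 1) := by
          rw [hNc, repCountZ_natCast, repCount_formula h r1 r2 zn hh1 hr1 hr2]
        rw [hrc] at hN
        have hub := ubA h k i j r2 (zn/(2*h+1)+1) hij hh hh1 hr2 hN
        have hzlt : zn < (zn/(2*h+1)+1)*(2*h+1) := by
          have h1 := Nat.div_add_mod zn (2*h+1)
          have h2 : zn % (2*h+1) < 2*h+1 := Nat.mod_lt _ (by omega)
          have e : (zn/(2*h+1)+1)*(2*h+1) = (2*h+1)*(zn/(2*h+1)) + (2*h+1) := by ring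
          omega
        have claim1 : r1*(h*(2*h+1)) + r2*((h+1)*(2*h+1)) + zn*((h+1)*(2*h+3))
            ≤ h*(h*(2*h+1)) + r2*((h+1)*(2*h+1))
              + ((zn/(2*h+1)+1)*(2*h+1)-1)*((h+1)*(2*h+3)) := by
          have c1 : r1*(h*(2*h+1)) ≤ h*(h*(2*h+1)) := Nat.mul_le_mul_right _ hr1
          have c3 : zn*((h+1)*(2*h+3)) ≤ ((zn/(2*h+1)+1)*(2*h+1)-1)*((h+1)*(2*h+3)) :=
            Nat.mul_le_mul_right _ (by omega)
          omega
        have claim2 : h*(h*(2*h+1)) + r2*((h+1)*(2*h+1))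
              + ((zn/(2*h+1)+1)*(2*h+1)-1)*((h+1)*(2*h+3)) + 1 + 2*((h+1)*(2*h+1))
            = (h+r2+(2*h+3)*(zn/(2*h+1)+1))*((h+1)*(2*h+1)) := by
          zify [show 1 ≤ (zn/(2*h+1)+1)*(2*h+1) by omega]
          ring
        have hcoef : h+r2+(2*h+3)*(zn/(2*h+1)+1) ≤ ((2*k+3)*h+3*i) + 2 := by
          have e1 : (2*k+3)*h = (2*k+2)*h + h := by ring
          omega
        have claim3 : (h+r2+(2*h+3)*(zn/(2*h+1)+1))*((h+1)*(2*h+1))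
            ≤ (((2*k+3)*h+3*i) + 2)*((h+1)*(2*h+1)) := Nat.mul_le_mul_right _ hcoef
        have e2 : (((2*k+3)*h+3*i) + 2)*((h+1)*(2*h+1))
            = ((2*k+3)*h+3*i)*((h+1)*(2*h+1)) + 2*((h+1)*(2*h+1)) := by ring
        have hfin : r1*(h*(2*h+1)) + r2*((h+1)*(2*h+1)) + zn*((h+1)*(2*h+3))
            ≤ ((2*k+3)*h+3*i)*((h+1)*(2*h+1)) - 1 := by omega
        rw [hNc]
        have hcast : ((((2*k+3)*h+3*i)*((h+1)*(2*h+1)) - 1 : ℕ) : ℤ)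
            = (((2*k+3)*h+3*i : ℕ) : ℤ) * (((h:ℤ)+1)*(2*(h:ℤ)+1)) - 1 := by
          have hMge : 1 ≤ ((2*k+3)*h+3*i) * ((h+1)*(2*h+1)) := by
            have h1 : ((2*k+3)*h+3*i) ≠ 0 := by omega
            have h2 : ((h+1)*(2*h+1)) ≠ 0 := Nat.mul_ne_zero (by omega) (by omega)
            exact Nat.one_le_iff_ne_zero.mpr (Nat.mul_ne_zero h1 h2)
          push_cast [hMge]
          ring
        rw [← hcast]
        exact_mod_cast hfin
end Frob



/-- writing `s = k(k+1) + i` with `0 ≤ i ≤ 2k+1`, for even `n > N_s^even`,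
`g(t_n, t_{n+1}, t_{n+2}; s) = ((n+1)(n+2)/4)((2x_s^even + y_s^even + 3)n + 6x_s^even) - 1`. -/
theorem stmt_6 (s k i n : ℕ) (hi : i ≤ 2 * k + 1) (hs : s = k * (k + 1) + i)
    (hn : Even n) (hbound : (n : ℤ) > NEven s) :
    genFrob ![t n, t (n + 1), t (n + 2)] s =
      ((n : ℤ) + 1) * ((n : ℤ) + 2) *
        ((2 * (xEvenN k i : ℤ) + (yEvenN k i : ℤ) + 3) * (n : ℤ) + 6 * (xEvenN k i : ℤ)) / 4
        - 1 := by
  subst hs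
  obtain ⟨h, rfl⟩ : ∃ h, n = 2*h := by
    obtain ⟨r, hr⟩ := hn
    exact ⟨r, by omega⟩
  have hsq : 3*(Nat.sqrt (k*(k+1)+i+1)) ≤ h+2 := by
    unfold NEven at hbound
    push_cast at hbound
    omega
  have hh1 : 1 ≤ h := by
    have h1 : 1 ≤ Nat.sqrt (k*(k+1)+i+1) := Nat.le_sqrt.mpr (by omega)
    omega
  have hkk : 3*k ≤ h+2 := by
    have e : k*(k+1) = k*k+k := by ring
    have h1 : k ≤ Nat.sqrt (k*(k+1)+i+1) := Nat.le_sqrt.mpr (by omega)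
    omega
  have hstrong : k ≤ i → 3*k+1 ≤ h := by
    intro hik
    have e : k*(k+1) = k*k+k := by ring
    have e2 : (k+1)*(k+1) = k*k+2*k+1 := by ring
    have h1 : k+1 ≤ Nat.sqrt (k*(k+1)+i+1) := Nat.le_sqrt.mpr (by omega)
    omega
  obtain ⟨ht0, ht1, ht2⟩ := Frob.t_eval h
  rw [ht0, ht1, ht2]
  unfold genFrob
  rcases le_or_gt i k with hik | hik
  · have hx : xEvenN k i = i := if_pos hik
    have hy : yEvenN k i = 2*(k-i) := if_pos hik
    have hgl := Frob.greatestA h k i (k-i) (by omega) hkk hh1 (fun hj => hstrong (by omega))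
    rw [hgl.csSup_eq, hx, hy]
    have hE : ((2*h : ℕ) : ℤ) + 1 = 2*(h:ℤ)+1 := by push_cast; ring
    have hE2 : (((2*h : ℕ) : ℤ) + 1) * (((2*h : ℕ) : ℤ) + 2) *
        ((2 * ((i:ℕ) : ℤ) + ((2*(k-i) : ℕ) : ℤ) + 3) * ((2*h : ℕ) : ℤ) + 6 * ((i:ℕ) : ℤ))
        = 4 * ((((2*k+3)*h+3*i : ℕ) : ℤ) * (((h:ℤ)+1)*(2*(h:ℤ)+1))) := by
      push_cast [hik]
      ring
    rw [hE2, Int.mul_ediv_cancel_left _ (by norm_num : (4:ℤ) ≠ 0)]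
  · have hx : xEvenN k i = i-k-1 := if_neg (by omega)
    have hy : yEvenN k i = 4*k+3-2*i := if_neg (by omega)
    have hgl := Frob.greatestB h k i (2*k+1-i) (by omega) (by omega) (hstrong (by omega))
    rw [hgl.csSup_eq, hx, hy]
    have hE2 : (((2*h : ℕ) : ℤ) + 1) * (((2*h : ℕ) : ℤ) + 2) *
        ((2 * (((i-k-1) : ℕ) : ℤ) + (((4*k+3-2*i) : ℕ) : ℤ) + 3) * ((2*h : ℕ) : ℤ)
          + 6 * (((i-k-1) : ℕ) : ℤ))
        = 4 * ((((2*k+4)*h+3*k-3*(2*k+1-i) : ℕ) : ℤ) * (((h:ℤ)+1)*(2*(h:ℤ)+1))) := by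
      push_cast [show k ≤ i by omega, show 1 ≤ i-k by omega, show 2*i ≤ 4*k+3 by omega, show i ≤ 2*k+1 from hi,
        show 3*(2*k+1-i) ≤ (2*k+4)*h+3*k by
          have e0 : (2*k+4)*h = 2*(k*h)+4*h := by ring
          omega]
      ring
    rw [hE2, Int.mul_ediv_cancel_left _ (by norm_num : (4:ℤ) ≠ 0)]
end

section
/- Let s ≥ 0 be an integer. For every odd integer n with n > N_s^odd, the generalized Frobenius number of the three consecutive triangular numbers satisfies g(t_n, t_{n+1}, t_{n+2}; s) = ((n+1)(n+2)/4)·((x_s^odd + 2y_s^odd + 3)n + 3(x_s^odd − 1)) − 1. -/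
open Finset

namespace Stmt7Aux

set_option maxHeartbeats 1000000

lemma ineq1 (P j u B e v k : ℕ) (hj : u + j = k) (hje : j ≤ e) (hv : v ≤ 2*j + B) :
    (2*P+1)*u + (P+2)*v ≤ k*(2*P+1) + B*(P+2) + 3*e := by
  have h2 := Nat.mul_le_mul_left (P+2) hv
  nlinarith [h2]

lemma ineq2 (P j u B e v k : ℕ) (hj : u + j = k) (h3k : 3*k ≤ P+1) (hv : v + 1 ≤ 2*j + B) :
    (2*P+1)*u + (P+2)*v ≤ k*(2*P+1) + B*(P+2) + 3*e := by
  have h2 := Nat.mul_le_mul_left (P+2) hv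
  nlinarith [h2]

def sols (a b c m : ℕ) : Finset (ℕ × ℕ × ℕ) :=
  ((range (m+1)) ×ˢ (range (m+1)) ×ˢ (range (m+1))).filter
    fun p => a * p.1 + b * p.2.1 + c * p.2.2 = m

lemma mem_sols {a b c m x y z : ℕ} (ha : 1 ≤ a) (hb : 1 ≤ b) (hc : 1 ≤ c)
    (h : a * x + b * y + c * z = m) : (x, y, z) ∈ sols a b c m := by
  have hx : x ≤ a * x := Nat.le_mul_of_pos_left x ha
  have hy : y ≤ b * y := Nat.le_mul_of_pos_left y hb
  have hz : z ≤ c * z := Nat.le_mul_of_pos_left z hc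
  simp only [sols, mem_filter, mem_product, mem_range]
  exact ⟨⟨by omega, by omega, by omega⟩, h⟩

lemma sols_eq {a b c m x y z : ℕ} (h : (x, y, z) ∈ sols a b c m) :
    a * x + b * y + c * z = m := by
  simpa [sols, mem_filter] using (mem_filter.mp h).2

lemma sols_eq' {a b c m : ℕ} {p : ℕ × ℕ × ℕ} (h : p ∈ sols a b c m) :
    a * p.1 + b * p.2.1 + c * p.2.2 = m := by
  simpa [sols, mem_filter] using (mem_filter.mp h).2

def Tset (k : ℕ) (cnt : ℕ → ℕ) : Finset (ℕ × ℕ) :=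
  (range (k+1)).biUnion fun j => (range (cnt j)).image fun v => (k - j, v)

lemma mem_Tset {k u v : ℕ} {cnt : ℕ → ℕ} :
    (u, v) ∈ Tset k cnt ↔ u ≤ k ∧ v < cnt (k - u) := by
  simp only [Tset, mem_biUnion, mem_image, mem_range]
  constructor
  · rintro ⟨j, hj, w, hw, h⟩
    obtain ⟨h1, h2⟩ := Prod.mk.injEq .. ▸ h
    have : k - j = u := by rw [← h1]
    have : v = w := by omega
    constructor
    · omega
    · have : k - u = j := by omega
      rw [this]; omega
  · rintro ⟨hu, hv⟩
    refine ⟨k - u, by omega, v, hv, ?_⟩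
    rw [show k - (k - u) = u by omega]

lemma Tcard (k : ℕ) (cnt : ℕ → ℕ) :
    (Tset k cnt).card = ∑ j ∈ range (k+1), cnt j := by
  rw [Tset, Finset.card_biUnion]
  · exact Finset.sum_congr rfl fun j _ => by
      rw [Finset.card_image_of_injective _ (fun v w h => (Prod.mk.injEq .. ▸ h).2),
        card_range]
  · intro i hi j hj hij
    rw [Function.onFun, Finset.disjoint_left]
    rintro ⟨u, v⟩ h1 h2
    simp only [mem_image, mem_range] at h1 h2
    obtain ⟨w1, _, hw1⟩ := h1
    obtain ⟨w2, _, hw2⟩ := h2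
    simp only [coe_range, Set.mem_Iio] at hi hj
    have e1 : k - i = u := (Prod.mk.injEq .. ▸ hw1).1
    have e2 : k - j = u := (Prod.mk.injEq .. ▸ hw2).1
    omega

lemma sum_cnt (k B e : ℕ) (c : ℕ) (q : ℕ → Prop) [DecidablePred q]
    (hq : ∀ j, j < k + 1 → (q j ↔ j < e + c)) (hec : e + c ≤ k + 1) :
    ∑ j ∈ range (k+1), (2*j + B + (if q j then 1 else 0)) =
      k*(k+1) + B*(k+1) + (e + c) := by
  have h1 : ∑ j ∈ range (k+1), (2*j + B + (if q j then 1 else 0)) =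
      (∑ j ∈ range (k+1), 2*j) + (∑ _j ∈ range (k+1), B)
        + ∑ j ∈ range (k+1), (if q j then 1 else 0) := by
    rw [← Finset.sum_add_distrib, ← Finset.sum_add_distrib]
  have h2 : (∑ j ∈ range (k+1), j) * 2 = (k+1)*k := Finset.sum_range_id_mul_two (k+1)
  have h3 : ∑ j ∈ range (k+1), 2*j = 2 * ∑ j ∈ range (k+1), j := by
    rw [Finset.mul_sum]
  have h4 : ∑ j ∈ range (k+1), (if q j then (1:ℕ) else 0) = e + c := by
    rw [Finset.sum_boole]
    have : (range (k+1)).filter q = range (e + c) := by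
      ext x
      simp only [mem_filter, mem_range]
      constructor
      · rintro ⟨hx, hqx⟩; exact (hq x hx).mp hqx
      · intro hx; exact ⟨by omega, (hq x (by omega)).mpr hx⟩
    rw [this]
    simp
  have h5 : ∑ _j ∈ range (k+1), B = (k+1) * B := by
    rw [Finset.sum_const, card_range, smul_eq_mul]
  rw [h1, h3, h4, h5]
  have h6 : 2 * ∑ j ∈ range (k+1), j = (k+1)*k := by omega
  rw [h6]
  ring

lemma repCount_eq (a b c m : ℕ) (ha : 1 ≤ a) (hb : 1 ≤ b) (hc : 1 ≤ c) :
    repCount ![a, b, c] m = (sols a b c m).card := by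
  unfold repCount
  apply Finset.card_bij (fun x _ => ((x 0 : ℕ), (x 1 : ℕ), (x 2 : ℕ)))
  · intro x hx
    simp only [mem_filter, mem_univ, true_and, Fin.sum_univ_three] at hx
    simp only [Matrix.cons_val_zero, Matrix.cons_val_one, Matrix.head_cons,
      Matrix.cons_val_two, Matrix.tail_cons] at hx
    exact mem_sols ha hb hc hx
  · intro x hx y hy hxy
    simp only [Prod.mk.injEq] at hxy
    funext i
    fin_cases i <;> exact Fin.ext (by tauto)
  · rintro ⟨x, y, z⟩ hp
    simp only [sols, mem_filter, mem_product, mem_range] at hp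
    refine ⟨![⟨x, hp.1.1⟩, ⟨y, hp.1.2.1⟩, ⟨z, hp.1.2.2⟩], ?_, rfl⟩
    simp only [mem_filter, mem_univ, true_and, Fin.sum_univ_three]
    simpa using hp.2

lemma upper_card (P k B e : ℕ) (h3k : 3*k ≤ P+1) (he : e ≤ k) (m : ℕ)
    (hm : ((2*(P:ℤ)+2) * ((P+1)*(2*P+1)) + P * ((P+2)*(2*P+3))
        + ((P+1)*(2*P+3)) * (k*(2*P+1) + B*(P+2) + 3*e) - (P+1)*(2*P+3)) < (m:ℤ)) :
    k*(k+1) + B*(k+1) + (e + 1) ≤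
      (sols ((P+1)*(2*P+1)) ((P+1)*(2*P+3)) ((P+2)*(2*P+3)) m).card := by
  set x0 := m % (2*P+3) with hx0def
  set z0 := m % (P+1) with hz0def
  have hq1 : (2*P+3) * (m / (2*P+3)) + x0 = m := Nat.div_add_mod m (2*P+3)
  have hq2 : (P+1) * (m / (P+1)) + z0 = m := Nat.div_add_mod m (P+1)
  have hx0lt : x0 < 2*P+3 := Nat.mod_lt m (by omega)
  have hz0lt : z0 < P+1 := Nat.mod_lt m (by omega)
  have hm1 : (m:ℤ) = (2*(P:ℤ)+3) * ((m / (2*P+3) : ℕ) : ℤ) + (x0:ℤ) := by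
    exact_mod_cast hq1.symm
  have hm2 : (m:ℤ) = ((P:ℤ)+1) * ((m / (P+1) : ℕ) : ℤ) + (z0:ℤ) := by
    exact_mod_cast hq2.symm
  have hdvd1 : (2*(P:ℤ)+3) ∣ ((m:ℤ) - ((P:ℤ)+1)*(2*P+1)*x0 - ((P:ℤ)+2)*(2*P+3)*z0) :=
    ⟨((m / (2*P+3) : ℕ) : ℤ) - P*x0 - (P+2)*z0, by rw [hm1]; ring⟩
  have hdvd2 : ((P:ℤ)+1) ∣ ((m:ℤ) - ((P:ℤ)+1)*(2*P+1)*x0 - ((P:ℤ)+2)*(2*P+3)*z0) :=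
    ⟨((m / (P+1) : ℕ) : ℤ) - (2*P+1)*x0 - (2*P+5)*z0, by rw [hm2]; ring⟩
  have hcop : IsCoprime ((P:ℤ)+1) (2*(P:ℤ)+3) := ⟨-2, 1, by ring⟩
  obtain ⟨Wz, hWz⟩ := hcop.mul_dvd hdvd2 hdvd1
  have hx0le : (x0:ℤ) ≤ 2*(P:ℤ)+2 := by exact_mod_cast Nat.lt_succ_iff.mp (by omega)
  have hz0le : (z0:ℤ) ≤ (P:ℤ) := by exact_mod_cast Nat.lt_succ_iff.mp (by omega)
  have hx00 : (0:ℤ) ≤ (x0:ℤ) := Int.natCast_nonneg _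
  have hz00 : (0:ℤ) ≤ (z0:ℤ) := Int.natCast_nonneg _
  have hmWz : (m:ℤ) = ((P:ℤ)+1)*(2*P+1)*x0 + ((P:ℤ)+2)*(2*P+3)*z0
      + (((P:ℤ)+1)*(2*(P:ℤ)+3))*Wz := by linarith [hWz]
  have hWV : (k*(2*(P:ℤ)+1) + B*(P+2) + 3*e) ≤ Wz := by
    by_contra hcon
    push_neg at hcon
    have hA : ((P:ℤ)+1)*(2*P+1)*x0 ≤ ((P:ℤ)+1)*(2*P+1)*(2*(P:ℤ)+2) :=
      mul_le_mul_of_nonneg_left hx0le (by positivity)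
    have hC : ((P:ℤ)+2)*(2*P+3)*z0 ≤ ((P:ℤ)+2)*(2*P+3)*(P:ℤ) :=
      mul_le_mul_of_nonneg_left hz0le (by positivity)
    have hWle : Wz ≤ (k*(2*(P:ℤ)+1) + B*(P+2) + 3*e) - 1 := by omega
    have hB : (((P:ℤ)+1)*(2*(P:ℤ)+3))*Wz
        ≤ (((P:ℤ)+1)*(2*(P:ℤ)+3))*((k*(2*(P:ℤ)+1) + B*(P+2) + 3*e) - 1) :=
      mul_le_mul_of_nonneg_left hWle (by positivity)
    linarith [hm, hmWz, hA, hC, hB]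
  have hV0 : (0:ℤ) ≤ k*(2*(P:ℤ)+1) + B*(P+2) + 3*e := by positivity
  have hWz0 : 0 ≤ Wz := le_trans hV0 hWV
  have hWcast : ((Wz.toNat : ℤ)) = Wz := Int.toNat_of_nonneg hWz0
  set W := Wz.toNat with hWdef
  have hmWn : m = (P+1)*(2*P+1)*x0 + (P+2)*(2*P+3)*z0 + (P+1)*(2*P+3)*W := by
    have : (m:ℤ) = ((P:ℤ)+1)*(2*P+1)*x0 + ((P:ℤ)+2)*(2*P+3)*z0
        + (((P:ℤ)+1)*(2*(P:ℤ)+3))*(W:ℤ) := by rw [hWcast]; exact hmWz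
    exact_mod_cast this
  have hVW : k*(2*P+1) + B*(P+2) + 3*e ≤ W := by
    have : (↑(k*(2*P+1) + B*(P+2) + 3*e) : ℤ) ≤ (W:ℤ) := by rw [hWcast]; push_cast; linarith
    exact_mod_cast this
  have hcard := Finset.card_le_card_of_injOn
      (f := fun p : ℕ × ℕ => (x0 + (2*P+3)*p.1,
          W - ((2*P+1)*p.1 + (P+2)*p.2), z0 + (P+1)*p.2))
      (s := Tset k (fun j => 2*j + B + if j ≤ e then 1 else 0))
      (t := sols ((P+1)*(2*P+1)) ((P+1)*(2*P+3)) ((P+2)*(2*P+3)) m)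
      ?_ ?_
  · rw [Tcard, sum_cnt k B e 1 _ (fun j hj => by constructor <;> omega) (by omega)] at hcard
    exact hcard
  · rintro ⟨u, v⟩ hT
    rw [Finset.mem_coe, mem_Tset] at hT
    obtain ⟨hu, hv⟩ := hT
    obtain ⟨j, hj⟩ : ∃ j, u + j = k := ⟨k - u, by omega⟩
    rw [show k - u = j by omega] at hv
    have hf : (2*P+1)*u + (P+2)*v ≤ k*(2*P+1) + B*(P+2) + 3*e := by
      rcases le_or_gt j e with hje | hje
      · have hv' : v ≤ 2*j + B := by simp only [if_pos hje] at hv; omega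
        exact ineq1 P j u B e v k hj hje hv'
      · have hv' : v + 1 ≤ 2*j + B := by simp only [if_neg (by omega : ¬ j ≤ e)] at hv; omega
        exact ineq2 P j u B e v k hj h3k hv'
    have hfW : (2*P+1)*u + (P+2)*v ≤ W := le_trans hf hVW
    obtain ⟨y', hy'⟩ : ∃ y', W = ((2*P+1)*u + (P+2)*v) + y' := ⟨W - ((2*P+1)*u + (P+2)*v), by omega⟩
    have hsub : W - ((2*P+1)*u + (P+2)*v) = y' := by omega
    show (x0 + (2*P+3)*u, W - ((2*P+1)*u + (P+2)*v), z0 + (P+1)*v) ∈ sols _ _ _ m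
    rw [hsub]
    apply mem_sols (Nat.one_le_iff_ne_zero.mpr (by positivity)) (Nat.one_le_iff_ne_zero.mpr (by positivity)) (Nat.one_le_iff_ne_zero.mpr (by positivity))
    rw [hmWn, hy']
    ring
  · rintro ⟨u1, v1⟩ h1 ⟨u2, v2⟩ h2 heq
    simp only [Prod.mk.injEq] at heq
    obtain ⟨e1, e2, e3⟩ := heq
    have hu : u1 = u2 := by
      have h' : (2*P+3)*u1 = (2*P+3)*u2 := by omega
      exact Nat.eq_of_mul_eq_mul_left (by omega) h'
    have hv : v1 = v2 := by
      have h' : (P+1)*v1 = (P+1)*v2 := by omega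
      exact Nat.eq_of_mul_eq_mul_left (by omega) h'
    simp [hu, hv]

lemma ineq3 (P j u B e v k : ℕ) (hj : u + j = k) (h3k : 3*k ≤ P+1) (he : e ≤ k) (hje : j < e)
    (hv : 2*j + B + 1 ≤ v) (hfV : (2*P+1)*u + (P+2)*v + 1 ≤ k*(2*P+1) + B*(P+2) + 3*e) :
    False := by
  have h2 := Nat.mul_le_mul_left (P+2) hv
  nlinarith [h2]

lemma ineq4 (P j u B e v k : ℕ) (hj : u + j = k) (hje : e ≤ j)
    (hv : 2*j + B ≤ v) (hfV : (2*P+1)*u + (P+2)*v + 1 ≤ k*(2*P+1) + B*(P+2) + 3*e) :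
    False := by
  have h2 := Nat.mul_le_mul_left (P+2) hv
  nlinarith [h2]

lemma ineq5 (P u B e v k : ℕ) (hu : k + 1 ≤ u) (hBe : B*(P+2) + 3*e < 2*P+2)
    (hfV : (2*P+1)*u + (P+2)*v + 1 ≤ k*(2*P+1) + B*(P+2) + 3*e) :
    False := by
  have h2 := Nat.mul_le_mul_left (2*P+1) hu
  nlinarith [h2]

lemma sols_shape (P k B e m x y z : ℕ)
    (hm : (m:ℤ) = (2*(P:ℤ)+2) * (((P:ℤ)+1)*(2*(P:ℤ)+1)) + (P:ℤ) * (((P:ℤ)+2)*(2*(P:ℤ)+3))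
        + (((P:ℤ)+1)*(2*(P:ℤ)+3)) * ((k:ℤ)*(2*(P:ℤ)+1) + (B:ℤ)*((P:ℤ)+2) + 3*(e:ℤ))
        - ((P:ℤ)+1)*(2*(P:ℤ)+3))
    (heq : (P+1)*(2*P+1) * x + (P+1)*(2*P+3) * y + (P+2)*(2*P+3) * z = m) :
    ∃ u v, x = 2*P+2 + (2*P+3)*u ∧ z = P + (P+1)*v ∧
      ((y:ℤ) + ((2*(P:ℤ)+1)*(u:ℤ) + ((P:ℤ)+2)*(v:ℤ)) + 1
        = (k:ℤ)*(2*(P:ℤ)+1) + (B:ℤ)*((P:ℤ)+2) + 3*(e:ℤ)) := by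
  have heqZ : ((P:ℤ)+1)*(2*(P:ℤ)+1) * (x:ℤ) + ((P:ℤ)+1)*(2*(P:ℤ)+3) * (y:ℤ)
      + ((P:ℤ)+2)*(2*(P:ℤ)+3) * (z:ℤ) = (m:ℤ) := by exact_mod_cast heq
  have hD1 : (2*(P:ℤ)+3) ∣ ((x:ℤ) - (2*(P:ℤ)+2)) :=
    ⟨((P:ℤ)+1)*(((k:ℤ)*(2*(P:ℤ)+1) + (B:ℤ)*((P:ℤ)+2) + 3*(e:ℤ)) - 1 - (y:ℤ))
      + ((P:ℤ)+2)*((P:ℤ) - (z:ℤ)) - (P:ℤ)*((x:ℤ) - (2*(P:ℤ)+2)),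
     by linear_combination heqZ + hm⟩
  obtain ⟨w1, hw1⟩ := hD1
  have hw10 : 0 ≤ w1 := by
    by_contra hcon
    push_neg at hcon
    have h1 : w1 ≤ -1 := by omega
    have h2 : (2*(P:ℤ)+3)*w1 ≤ (2*(P:ℤ)+3)*(-1) := mul_le_mul_of_nonneg_left h1 (by positivity)
    have hx0 : (0:ℤ) ≤ (x:ℤ) := Int.natCast_nonneg _
    linarith [hw1]
  obtain ⟨u, hu⟩ : ∃ u : ℕ, (u : ℤ) = w1 := ⟨w1.toNat, Int.toNat_of_nonneg hw10⟩
  have hxu : x = 2*P+2 + (2*P+3)*u := by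
    have : (x:ℤ) = 2*(P:ℤ)+2 + (2*(P:ℤ)+3)*(u:ℤ) := by rw [hu]; linarith [hw1]
    exact_mod_cast this
  have hD2 : ((P:ℤ)+1) ∣ ((z:ℤ) - (P:ℤ)) :=
    ⟨(2*(P:ℤ)+1)*((2*(P:ℤ)+2) - (x:ℤ))
      + (2*(P:ℤ)+3)*(((k:ℤ)*(2*(P:ℤ)+1) + (B:ℤ)*((P:ℤ)+2) + 3*(e:ℤ)) - 1 - (y:ℤ))
      - (2*(P:ℤ)+5)*((z:ℤ) - (P:ℤ)),
     by linear_combination heqZ + hm⟩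
  obtain ⟨w2, hw2⟩ := hD2
  have hw20 : 0 ≤ w2 := by
    by_contra hcon
    push_neg at hcon
    have h1 : w2 ≤ -1 := by omega
    have h2 : ((P:ℤ)+1)*w2 ≤ ((P:ℤ)+1)*(-1) := mul_le_mul_of_nonneg_left h1 (by positivity)
    have hz0 : (0:ℤ) ≤ (z:ℤ) := Int.natCast_nonneg _
    linarith [hw2]
  obtain ⟨v, hv⟩ : ∃ v : ℕ, (v : ℤ) = w2 := ⟨w2.toNat, Int.toNat_of_nonneg hw20⟩
  have hzv : z = P + (P+1)*v := by
    have : (z:ℤ) = (P:ℤ) + ((P:ℤ)+1)*(v:ℤ) := by rw [hv]; linarith [hw2]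
    exact_mod_cast this
  have hxZ : (x:ℤ) = 2*(P:ℤ)+2 + (2*(P:ℤ)+3)*(u:ℤ) := by exact_mod_cast hxu
  have hzZ : (z:ℤ) = (P:ℤ) + ((P:ℤ)+1)*(v:ℤ) := by exact_mod_cast hzv
  have key : (((P:ℤ)+1)*(2*(P:ℤ)+3)) * ((y:ℤ) + ((2*(P:ℤ)+1)*(u:ℤ) + ((P:ℤ)+2)*(v:ℤ)) + 1)
      = (((P:ℤ)+1)*(2*(P:ℤ)+3)) * ((k:ℤ)*(2*(P:ℤ)+1) + (B:ℤ)*((P:ℤ)+2) + 3*(e:ℤ)) := by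
    linear_combination heqZ + hm - (((P:ℤ)+1)*(2*(P:ℤ)+1)) * hxZ - (((P:ℤ)+2)*(2*(P:ℤ)+3)) * hzZ
  have hy := mul_left_cancel₀ (show (((P:ℤ)+1)*(2*(P:ℤ)+3)) ≠ 0 by positivity) key
  exact ⟨u, v, hxu, hzv, hy⟩

lemma mem_card (P k B e : ℕ) (h3k : 3*k ≤ P+1) (hBe : B*(P+2) + 3*e < 2*P+2) (he : e ≤ k)
    (m : ℕ)
    (hm : (m:ℤ) = (2*(P:ℤ)+2) * (((P:ℤ)+1)*(2*(P:ℤ)+1)) + (P:ℤ) * (((P:ℤ)+2)*(2*(P:ℤ)+3))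
        + (((P:ℤ)+1)*(2*(P:ℤ)+3)) * ((k:ℤ)*(2*(P:ℤ)+1) + (B:ℤ)*((P:ℤ)+2) + 3*(e:ℤ))
        - ((P:ℤ)+1)*(2*(P:ℤ)+3)) :
    (sols ((P+1)*(2*P+1)) ((P+1)*(2*P+3)) ((P+2)*(2*P+3)) m).card
      ≤ k*(k+1) + B*(k+1) + e := by
  have hF : ∀ p : ℕ × ℕ × ℕ,
      p ∈ sols ((P+1)*(2*P+1)) ((P+1)*(2*P+3)) ((P+2)*(2*P+3)) m →
      ∃ u v, p.1 = 2*P+2 + (2*P+3)*u ∧ p.2.2 = P + (P+1)*v ∧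
        ((p.1 - (2*P+2))/(2*P+3), (p.2.2 - P)/(P+1)) = (u, v) ∧
        u ≤ k ∧ v < 2*(k-u) + B + (if k - u < e then 1 else 0) := by
    rintro ⟨x, y, z⟩ hp
    obtain ⟨u, v, hxu, hzv, hy⟩ := sols_shape P k B e m x y z hm (sols_eq hp)
    have hFx : (x - (2*P+2))/(2*P+3) = u := by
      rw [hxu, Nat.add_sub_cancel_left, Nat.mul_div_cancel_left _ (by omega : 0 < 2*P+3)]
    have hFz : (z - P)/(P+1) = v := by
      rw [hzv, Nat.add_sub_cancel_left, Nat.mul_div_cancel_left _ (by omega : 0 < P+1)]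
    have hy0 : (0:ℤ) ≤ (y:ℤ) := Int.natCast_nonneg _
    have hfV : (2*P+1)*u + (P+2)*v + 1 ≤ k*(2*P+1) + B*(P+2) + 3*e := by
      have hz : ((2*(P:ℤ)+1)*(u:ℤ) + ((P:ℤ)+2)*(v:ℤ)) + 1
          ≤ (k:ℤ)*(2*(P:ℤ)+1) + (B:ℤ)*((P:ℤ)+2) + 3*(e:ℤ) := by linarith [hy]
      have hz' : ((2*P+1)*u + (P+2)*v + 1 : ℕ) ≤ ((k*(2*P+1) + B*(P+2) + 3*e : ℕ) : ℤ) := by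
        push_cast
        linarith [hz]
      exact_mod_cast hz'
    have hu : u ≤ k := by
      by_contra hcon
      push_neg at hcon
      exact ineq5 P u B e v k hcon hBe hfV
    obtain ⟨j, hj⟩ : ∃ j, u + j = k := ⟨k - u, by omega⟩
    have hvlt : v < 2*j + B + (if j < e then 1 else 0) := by
      by_contra hcon
      push_neg at hcon
      rcases lt_or_ge j e with hje | hje
      · rw [if_pos hje] at hcon
        exact ineq3 P j u B e v k hj h3k he hje (by omega) hfV
      · rw [if_neg (by omega : ¬ j < e)] at hcon
        exact ineq4 P j u B e v k hj hje (by omega) hfV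
    refine ⟨u, v, hxu, hzv, by rw [hFx, hFz], hu, ?_⟩
    rw [show k - u = j by omega]
    exact hvlt
  have hcard := Finset.card_le_card_of_injOn
      (f := fun p : ℕ × ℕ × ℕ => ((p.1 - (2*P+2))/(2*P+3), (p.2.2 - P)/(P+1)))
      (s := sols ((P+1)*(2*P+1)) ((P+1)*(2*P+3)) ((P+2)*(2*P+3)) m)
      (t := Tset k (fun j => 2*j + B + if j < e then 1 else 0))
      ?_ ?_
  · rw [Tcard, sum_cnt k B e 0 _ (fun j hj => by constructor <;> omega) (by omega)] at hcard
    simpa using hcard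
  · intro p hp
    obtain ⟨u, v, _, _, hFp, hu, hv⟩ := hF p hp
    dsimp only
    rw [hFp, Finset.mem_coe, mem_Tset]
    exact ⟨hu, hv⟩
  · intro p hp q hq hpq
    have e1 := sols_eq' (Finset.mem_coe.mp hp)
    have e2 := sols_eq' (Finset.mem_coe.mp hq)
    obtain ⟨u1, v1, hx1, hz1, hF1, _, _⟩ := hF p (Finset.mem_coe.mp hp)
    obtain ⟨u2, v2, hx2, hz2, hF2, _, _⟩ := hF q (Finset.mem_coe.mp hq)
    dsimp only at hpq
    rw [hF1, hF2] at hpq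
    have h1 : u1 = u2 := (Prod.mk.injEq .. ▸ hpq).1
    have h2 : v1 = v2 := (Prod.mk.injEq .. ▸ hpq).2
    have hxx : p.1 = q.1 := by rw [hx1, hx2, h1]
    have hzz : p.2.2 = q.2.2 := by rw [hz1, hz2, h2]
    have hax : (P+1)*(2*P+1) * p.1 = (P+1)*(2*P+1) * q.1 := by rw [hxx]
    have hcz : (P+2)*(2*P+3) * p.2.2 = (P+2)*(2*P+3) * q.2.2 := by rw [hzz]
    have hyy : p.2.1 = q.2.1 := by
      have h' : (P+1)*(2*P+3) * p.2.1 = (P+1)*(2*P+3) * q.2.1 := by omega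
      exact Nat.eq_of_mul_eq_mul_left (by positivity) h'
    exact Prod.ext hxx (Prod.ext hyy hzz)

lemma one_le_h (x y : ℕ) : 1 ≤ (x+1)*(2*x+y+1) := Nat.one_le_iff_ne_zero.mpr (by positivity)

lemma main (P k B e s : ℕ) (he : e ≤ k) (hs : s = k*(k+1) + B*(k+1) + e)
    (h3k : 3*k ≤ P+1) (hBe : B*(P+2) + 3*e < 2*P+2) :
    genFrob ![(P+1)*(2*P+1), (P+1)*(2*P+3), (P+2)*(2*P+3)] s
      = (2*(P:ℤ)+2) * (((P:ℤ)+1)*(2*(P:ℤ)+1)) + (P:ℤ) * (((P:ℤ)+2)*(2*(P:ℤ)+3))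
        + (((P:ℤ)+1)*(2*(P:ℤ)+3)) * ((k:ℤ)*(2*(P:ℤ)+1) + (B:ℤ)*((P:ℤ)+2) + 3*(e:ℤ))
        - ((P:ℤ)+1)*(2*(P:ℤ)+3) := by
  have h1a : 1 ≤ (P+1)*(2*P+1) := one_le_h P 0
  have h1b : 1 ≤ (P+1)*(2*P+3) := one_le_h P 2
  have h1c : 1 ≤ (P+2)*(2*P+3) := by
    have := one_le_h P 2; nlinarith [this]
  set G : ℤ := (2*(P:ℤ)+2) * (((P:ℤ)+1)*(2*(P:ℤ)+1)) + (P:ℤ) * (((P:ℤ)+2)*(2*(P:ℤ)+3))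
        + (((P:ℤ)+1)*(2*(P:ℤ)+3)) * ((k:ℤ)*(2*(P:ℤ)+1) + (B:ℤ)*((P:ℤ)+2) + 3*(e:ℤ))
        - ((P:ℤ)+1)*(2*(P:ℤ)+3) with hGdef
  have hp0 : (0:ℤ) ≤ (P:ℤ) := Int.natCast_nonneg P
  have hbV : (0:ℤ) ≤ (((P:ℤ)+1)*(2*(P:ℤ)+3)) * ((k:ℤ)*(2*(P:ℤ)+1) + (B:ℤ)*((P:ℤ)+2) + 3*(e:ℤ)) := by
    have hk0 : (0:ℤ) ≤ (k:ℤ) := Int.natCast_nonneg k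
    have hB0 : (0:ℤ) ≤ (B:ℤ) := Int.natCast_nonneg B
    have he0 : (0:ℤ) ≤ (e:ℤ) := Int.natCast_nonneg e
    positivity
  have hPc : (0:ℤ) ≤ (P:ℤ) * (((P:ℤ)+2)*(2*(P:ℤ)+3)) := by positivity
  have hKey : ((P:ℤ)+1)*(2*(P:ℤ)+3) ≤ (2*(P:ℤ)+2) * (((P:ℤ)+1)*(2*(P:ℤ)+1)) + 1 := by
    nlinarith [hp0, mul_nonneg hp0 hp0, mul_nonneg (mul_nonneg hp0 hp0) hp0]
  have hG1 : -1 ≤ G := by rw [hGdef]; linarith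
  unfold genFrob
  apply IsGreatest.csSup_eq
  constructor
  · show repCountZ _ G ≤ s
    unfold repCountZ
    split_ifs with h0
    · rw [repCount_eq _ _ _ _ h1a h1b h1c]
      have hc : ((G.toNat : ℤ)) = G := Int.toNat_of_nonneg h0
      have := mem_card P k B e h3k hBe he G.toNat (by rw [hc, hGdef])
      omega
    · omega
  · intro mZ hmZ
    by_contra hcon
    push_neg at hcon
    have hm0 : 0 ≤ mZ := by linarith
    have hmn : ((mZ.toNat : ℤ)) = mZ := Int.toNat_of_nonneg hm0
    have hup := upper_card P k B e h3k he mZ.toNat (by rw [hmn, ← hGdef]; exact hcon)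
    have hmZ' : repCountZ ![(P+1)*(2*P+1), (P+1)*(2*P+3), (P+2)*(2*P+3)] mZ ≤ s := hmZ
    unfold repCountZ at hmZ'
    rw [if_pos hm0, repCount_eq _ _ _ _ h1a h1b h1c] at hmZ'
    omega

lemma div_helper (X Y : ℤ) (h : X = 4*(Y+1)) : X / 4 - 1 = Y := by
  rw [h, Int.mul_ediv_cancel_left _ (by norm_num)]
  ring

end Stmt7Aux

/-- writing `s = k(k+1) + i` with `0 ≤ i ≤ 2k+1`, for odd `n > N_s^odd`,
`g(t_n, t_{n+1}, t_{n+2}; s) = ((n+1)(n+2)/4)((x_s^odd + 2y_s^odd + 3)n + 3(x_s^odd - 1)) - 1`. -/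
theorem stmt_7 (s k i n : ℕ) (hi : i ≤ 2 * k + 1) (hs : s = k * (k + 1) + i)
    (hn : Odd n) (hbound : (n : ℤ) > NOdd s) :
    genFrob ![t n, t (n + 1), t (n + 2)] s =
      ((n : ℤ) + 1) * ((n : ℤ) + 2) *
        (((xOddN k i : ℤ) + 2 * (yOddN k i : ℤ) + 3) * (n : ℤ) + 3 * ((xOddN k i : ℤ) - 1)) / 4
        - 1 := by
  obtain ⟨P, hP⟩ : ∃ P, n = 2*P+1 := by
    obtain ⟨j, hj⟩ := hn
    exact ⟨j, by omega⟩
  subst hP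
  subst hs
  have ht1 : t (2*P+1) = (P+1)*(2*P+1) := by
    have h : (2*P+1) * ((2*P+1)+1) = ((P+1)*(2*P+1))*2 := by ring
    rw [t, h, Nat.mul_div_cancel _ (by omega)]
  have ht2 : t (2*P+1+1) = (P+1)*(2*P+3) := by
    have h : (2*P+1+1) * ((2*P+1+1)+1) = ((P+1)*(2*P+3))*2 := by ring
    rw [t, h, Nat.mul_div_cancel _ (by omega)]
  have ht3 : t (2*P+1+2) = (P+2)*(2*P+3) := by
    have h : (2*P+1+2) * ((2*P+1+2)+1) = ((P+2)*(2*P+3))*2 := by ring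
    rw [t, h, Nat.mul_div_cancel _ (by omega)]
  rw [ht1, ht2, ht3]
  simp only [NOdd] at hbound
  rcases le_or_gt i k with hik | hik
  · -- B = 0, e = i
    have hsq1 : 2*k+1 ≤ Nat.sqrt (4*(k*(k+1)+i)+5) := Nat.le_sqrt.mpr (by nlinarith)
    have hP3k : 3*k ≤ P+1 := by omega
    have hmain := Stmt7Aux.main P k 0 i (k*(k+1)+i) hik (by omega) hP3k (by omega)
    rw [hmain]
    have hx : (xOddN k i : ℤ) = 2*(i:ℤ) := by
      rw [show xOddN k i = 2*i from by simp only [xOddN, if_pos hik]]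
      push_cast
      ring
    have hy : (yOddN k i : ℤ) = (k:ℤ) - (i:ℤ) := by
      rw [show yOddN k i = k - i from by simp only [yOddN, if_pos hik]]
      rw [Nat.cast_sub hik]
    exact (Stmt7Aux.div_helper _ _ (by push_cast [hx, hy]; ring)).symm
  · -- B = 1
    obtain ⟨e, hie⟩ : ∃ e, i = k+1+e := ⟨i - k - 1, by omega⟩
    subst hie
    have hek : e ≤ k := by omega
    have hsq1 : 2*k+1 ≤ Nat.sqrt (4*(k*(k+1)+(k+1+e))+5) := Nat.le_sqrt.mpr (by nlinarith)
    have hP3k : 3*k ≤ P+1 := by omega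
    have hBe : 1*(P+2) + 3*e < 2*P+2 := by
      rcases lt_or_ge e k with hlt | hge
      · omega
      · have hek' : e = k := by omega
        subst hek'
        have hsq2 : 2*e+3 ≤ Nat.sqrt (4*(e*(e+1)+(e+1+e))+5) := Nat.le_sqrt.mpr (by nlinarith)
        omega
    have hmain := Stmt7Aux.main P k 1 e (k*(k+1)+(k+1+e)) hek (by omega) hP3k hBe
    rw [hmain]
    have hx : (xOddN k (k+1+e) : ℤ) = 2*(e:ℤ) + 1 := by
      rw [show xOddN k (k+1+e) = 2*e+1 from by
        simp only [xOddN, if_neg (by omega : ¬ (k+1+e ≤ k))]; omega]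
      push_cast
      ring
    have hy : (yOddN k (k+1+e) : ℤ) = (k:ℤ) - (e:ℤ) := by
      rw [show yOddN k (k+1+e) = k - e from by
        simp only [yOddN, if_neg (by omega : ¬ (k+1+e ≤ k))]; omega]
      rw [Nat.cast_sub hek]
    exact (Stmt7Aux.div_helper _ _ (by push_cast [hx, hy]; ring)).symm
end

section
/- Let k ≥ 0 and 0 ≤ i ≤ 2k+1 be integers and set s = k(k+1) + i. For every even integer n with n > N_s^even, the number of representations of g(n+1, n+3; x_s^even) + y_s^even·t_n by the three numbers t_n, n+1, n+3 equals s, i.e. d(g(n+1, n+3; x_s^even) + y_s^even·t_n ; t_n, n+1, n+3) = s. (Here n+1 = t_{n+1}/d_1 and n+3 = t_{n+2}/d_1 where d_1 = gcd(t_{n+1}, t_{n+2}) = (n+2)/2 for even n.) -/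
open Finset

def pairSet (a b M : ℕ) : Finset ℕ :=
  (Finset.range (M+1)).filter fun u => a*u ≤ M ∧ b ∣ M - a*u

lemma repCount_pair (a b M : ℕ) (ha : 0 < a) (hb : 0 < b) :
    repCount ![a,b] M = (pairSet a b M).card := by
  classical
  unfold repCount pairSet
  apply Finset.card_bij (fun x _ => ((x 0 : Fin (M+1)) : ℕ))
  · intro x hx
    simp only [Finset.mem_filter, Finset.mem_univ, true_and, Fin.sum_univ_two,
      Matrix.cons_val_zero, Matrix.cons_val_one, Matrix.head_cons] at hx
    simp only [Finset.mem_filter, Finset.mem_range]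
    have h0 : ((x 0 : Fin (M+1)) : ℕ) < M + 1 := (x 0).isLt
    refine ⟨h0, by omega, ⟨(x 1 : ℕ), by omega⟩⟩
  · intro x hx y hy hxy
    simp only [Finset.mem_filter, Finset.mem_univ, true_and, Fin.sum_univ_two,
      Matrix.cons_val_zero, Matrix.cons_val_one, Matrix.head_cons] at hx hy
    rw [hxy] at hx
    have hb1 : b * ((x 1 : Fin (M+1)) : ℕ) = b * ((y 1 : Fin (M+1)) : ℕ) := by omega
    have h1 := Nat.eq_of_mul_eq_mul_left hb hb1
    funext j
    fin_cases j
    · exact Fin.ext hxy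
    · exact Fin.ext h1
  · intro u hu
    simp only [Finset.mem_filter, Finset.mem_range] at hu
    obtain ⟨hu1, hu2, w, hw⟩ := hu
    have hwle : w < M + 1 := by
      rcases Nat.eq_zero_or_pos w with h | h
      · omega
      · have : w ≤ b * w := Nat.le_mul_of_pos_left w hb
        omega
    refine ⟨![⟨u, hu1⟩, ⟨w, hwle⟩], ?_, rfl⟩
    simp only [Finset.mem_filter, Finset.mem_univ, true_and, Fin.sum_univ_two,
      Matrix.cons_val_zero, Matrix.cons_val_one, Matrix.head_cons]
    omega

lemma pairSet_eq_image (a b M u₀ : ℕ) (hab : Nat.Coprime a b) (ha : 0 < a) (hb : 0 < b)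
    (hu₀ : u₀ < b) (hle : a * u₀ ≤ M) (hdvd : b ∣ M - a * u₀) :
    pairSet a b M = (Finset.range ((M - a*u₀)/b/a + 1)).image (fun j => u₀ + j*b) := by
  obtain ⟨v₀, hv₀⟩ := hdvd
  have hv₀' : M = a * u₀ + b * v₀ := by omega
  have hq : (M - a*u₀)/b = v₀ := by rw [hv₀, Nat.mul_div_cancel_left _ hb]
  have hcop : IsCoprime (b : ℤ) (a : ℤ) := by
    rw [Int.isCoprime_iff_gcd_eq_one, Int.gcd_natCast_natCast]
    exact hab.symm
  ext u
  simp only [pairSet, Finset.mem_filter, Finset.mem_range, Finset.mem_image, hq]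
  constructor
  · rintro ⟨hur, hle', v, hv⟩
    have hv' : a * u + b * v = M := by omega
    have hdvd2 : (b : ℤ) ∣ ((u : ℤ) - u₀) := by
      apply hcop.dvd_of_dvd_mul_right
      have : ((u : ℤ) - u₀) * a = b * ((v₀ : ℤ) - v) := by push_cast; nlinarith [hv₀', hv']
      exact ⟨_, this⟩
    obtain ⟨j, hj⟩ := hdvd2
    have hj0 : 0 ≤ j := by nlinarith [hj, (Nat.cast_nonneg u : (0:ℤ) ≤ u), (by exact_mod_cast hu₀ : (u₀:ℤ) < b), (by exact_mod_cast hb : (0:ℤ) < b)]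
    obtain ⟨jn, rfl⟩ : ∃ jn : ℕ, j = (jn : ℤ) := ⟨j.toNat, (Int.toNat_of_nonneg hj0).symm⟩
    have hu_eq : u = u₀ + jn * b := by
      have h : (u:ℤ) = u₀ + jn * b := by linarith [hj, mul_comm (b:ℤ) (jn:ℤ)]
      exact_mod_cast h
    refine ⟨jn, ?_, hu_eq.symm⟩
    rw [Nat.lt_succ_iff, Nat.le_div_iff_mul_le ha]
    have hle'' : a*(u₀+jn*b) ≤ a*u₀+b*v₀ := by rw [← hu_eq, ← hv₀']; exact hle'
    have e : a*(u₀+jn*b) = a*u₀ + jn*a*b := by ring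
    have e2 : v₀*b = b*v₀ := mul_comm _ _
    have hja : jn * a * b ≤ v₀ * b := by linarith
    exact Nat.le_of_mul_le_mul_right hja hb
  · rintro ⟨j, hj, rfl⟩
    rw [Nat.lt_succ_iff, Nat.le_div_iff_mul_le ha] at hj
    have h2 : (j*a) * b ≤ v₀ * b := Nat.mul_le_mul_right b hj
    have hle2 : a * (u₀ + j*b) ≤ M := by nlinarith [hv₀']
    have hub : u₀ + j*b ≤ a*(u₀+j*b) := Nat.le_mul_of_pos_left _ ha
    refine ⟨by omega, hle2, v₀ - j*a, ?_⟩
    have e : a*(u₀+j*b) = a*u₀ + j*a*b := by ring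
    have e5 : b*(j*a) = j*a*b := by ring
    have e6 : b*(v₀ - j*a) + b*(j*a) = b*v₀ := by rw [← Nat.left_distrib, Nat.sub_add_cancel hj]
    omega

lemma repCount_pair_eq (a b M u₀ : ℕ) (hab : Nat.Coprime a b) (ha : 0 < a) (hb : 0 < b)
    (hu₀ : u₀ < b) (hle : a * u₀ ≤ M) (hdvd : b ∣ M - a * u₀) :
    repCount ![a,b] M = (M - a*u₀)/b/a + 1 := by
  rw [repCount_pair a b M ha hb, pairSet_eq_image a b M u₀ hab ha hb hu₀ hle hdvd,
    Finset.card_image_of_injective _ (fun x y hxy => by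
      have h : u₀ + x*b = u₀ + y*b := hxy
      exact Nat.eq_of_mul_eq_mul_right hb (by omega)), Finset.card_range]

lemma exists_u0 (a b M : ℕ) (hab : Nat.Coprime a b) (hb : 0 < b) :
    ∃ u₀ < b, (b:ℤ) ∣ (M:ℤ) - a * u₀ := by
  haveI : NeZero b := ⟨hb.ne'⟩
  set z : ZMod b := (M : ZMod b) * ((a : ZMod b))⁻¹ with hz
  refine ⟨z.val, ZMod.val_lt z, ?_⟩
  have hu : ((a * z.val : ℕ) : ZMod b) = (M : ZMod b) := by
    push_cast
    rw [ZMod.natCast_val, ZMod.cast_id, hz, ← mul_assoc, mul_comm (a : ZMod b),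
      mul_assoc, ZMod.mul_inv_of_unit _ ((ZMod.isUnit_iff_coprime a b).2 hab), mul_one]
  have := (ZMod.natCast_eq_natCast_iff _ _ _).1 hu
  have h2 := (Nat.modEq_iff_dvd (n := b)).1 this
  push_cast at h2 ⊢
  exact h2

lemma repCount_pair_ge (a b x M : ℕ) (hab : Nat.Coprime a b) (ha : 2 ≤ a) (hb : 2 ≤ b)
    (hM : (x+1)*a*b + 1 ≤ M + a + b) : x + 1 ≤ repCount ![a,b] M := by
  obtain ⟨u₀, hu₀b, w, hw⟩ := exists_u0 a b M hab (by omega)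
  have hab2 : ((x:ℤ)+1)*a*b + 1 ≤ (M:ℤ) + a + b := by exact_mod_cast hM
  have hu₀b' : (u₀:ℤ) ≤ (b:ℤ) - 1 := by
    have : (u₀:ℤ) < (b:ℤ) := by exact_mod_cast hu₀b
    linarith
  have ha' : (2:ℤ) ≤ a := by exact_mod_cast ha
  have hb' : (2:ℤ) ≤ b := by exact_mod_cast hb
  have hau : (a:ℤ)*u₀ ≤ a*((b:ℤ)-1) := by
    apply mul_le_mul_of_nonneg_left hu₀b' (by linarith)
  have hbw : (b:ℤ)*w ≥ (x:ℤ)*a*b - b + 1 := by nlinarith [hw]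
  have hw0 : (x:ℤ)*a ≤ w := by nlinarith [hbw, hb']
  have hle : a * u₀ ≤ M := by
    have : (0:ℤ) ≤ (b:ℤ)*w := by nlinarith
    have : (a:ℤ)*u₀ ≤ M := by linarith [hw]
    exact_mod_cast this
  have hwn : ((w.toNat : ℤ)) = w := Int.toNat_of_nonneg (by nlinarith)
  have hdvd : b ∣ M - a*u₀ := by
    refine ⟨w.toNat, ?_⟩
    have : ((M - a*u₀ : ℕ) : ℤ) = (b:ℤ) * w.toNat := by
      rw [hwn, ← hw]
      push_cast [hle]
      ring
    exact_mod_cast this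
  rw [repCount_pair_eq a b M u₀ hab (by omega) (by omega) hu₀b hle hdvd]
  have hq : (M - a*u₀)/b = w.toNat := by
    obtain ⟨c, hc⟩ := hdvd
    rw [hc, Nat.mul_div_cancel_left _ (by omega : 0 < b)]
    have : ((M - a*u₀ : ℕ) : ℤ) = (b:ℤ)*w := by rw [← hw]; push_cast [hle]; ring
    rw [hc] at this
    have : (c:ℤ) = w := by
      have hbz : (b:ℤ) ≠ 0 := by linarith
      rw [Nat.cast_mul, mul_eq_mul_left_iff] at this
      push_cast at this
      rcases this with h | h
      · exact h
      · omega
    omega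
  rw [hq]
  have hx : x * a ≤ w.toNat := by
    have : ((x*a : ℕ):ℤ) ≤ (w.toNat : ℤ) := by rw [hwn]; push_cast; linarith
    exact_mod_cast this
  have : x ≤ w.toNat / a := (Nat.le_div_iff_mul_le (by omega)).2 hx
  omega

lemma pairSet_frob_empty (a b : ℕ) (hab : Nat.Coprime a b) (ha : 2 ≤ a) (hb : 2 ≤ b) :
    pairSet a b (a*b - a - b) = ∅ := by
  by_contra h
  obtain ⟨u, hu⟩ := Finset.nonempty_iff_ne_empty.2 h
  simp only [pairSet, Finset.mem_filter, Finset.mem_range] at hu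
  obtain ⟨hur, hle, v, hv⟩ := hu
  have hab3 : a + b ≤ a * b := by nlinarith
  have key : a*(u+1) + b*(v+1) = a*b := by
    have e1 : a*(u+1) = a*u + a := by ring
    have e2 : b*(v+1) = b*v + b := by ring
    omega
  have hva : v + 1 ≤ a := by
    have h1 : b*(v+1) ≤ a*b := by omega
    have h1' : b*(v+1) ≤ b*a := by rw [mul_comm b a]; exact h1
    exact Nat.le_of_mul_le_mul_left h1' (show 0 < b by omega)
  have hdvd2 : b ∣ a*(u+1) := by
    refine ⟨a - (v+1), ?_⟩
    have e3 : b*(a - (v+1)) + b*(v+1) = b*a := by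
      rw [← Nat.left_distrib, Nat.sub_add_cancel hva]
    have e4 : b*a = a*b := mul_comm _ _
    omega
  have hdu : b ∣ u + 1 := (Nat.Coprime.dvd_of_dvd_mul_left (hab.symm) hdvd2)
  have hbu : b ≤ u + 1 := Nat.le_of_dvd (by omega) hdu
  have h5 : a*b ≤ a*(u+1) := Nat.mul_le_mul_left a hbu
  have h6 : 0 < b*(v+1) := Nat.mul_pos (by omega) (by omega)
  omega

lemma repCount_frob_zero (a b : ℕ) (hab : Nat.Coprime a b) (ha : 2 ≤ a) (hb : 2 ≤ b) :
    repCount ![a,b] (a*b - a - b) = 0 := by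
  rw [repCount_pair a b _ (by omega) (by omega), pairSet_frob_empty a b hab ha hb,
    Finset.card_empty]

lemma repCount_frob (a b x : ℕ) (hab : Nat.Coprime a b) (ha : 2 ≤ a) (hb : 2 ≤ b) :
    repCount ![a,b] ((x+1)*a*b - a - b) ≤ x := by
  rcases Nat.eq_zero_or_pos x with rfl | hx
  · have e : (0+1)*a*b = a*b := by ring
    rw [e, repCount_frob_zero a b hab ha hb]
  · have e1 : (x+1)*a*b = x*a*b + a*b := by ring
    have e2 : a*(b-1) + a = a*b := by
      have h1 : b - 1 + 1 = b := by omega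
      calc a*(b-1) + a = a*((b-1)+1) := by ring
        _ = a*b := by rw [h1]
    have hab3 : a + b ≤ a*b := by nlinarith
    have hb_le : b ≤ x*a*b := by nlinarith
    have hle : a*(b-1) ≤ (x+1)*a*b - a - b := by omega
    have hxa : 1 ≤ x*a := Nat.mul_pos hx (by omega)
    have e5 : b*(x*a - 1) + b = b*(x*a) := by
      have h1 : x*a - 1 + 1 = x*a := by omega
      calc b*(x*a-1) + b = b*((x*a-1)+1) := by ring
        _ = b*(x*a) := by rw [h1]
    have e6 : b*(x*a) = x*a*b := by ring
    have hkey : (x+1)*a*b - a - b - a*(b-1) = b*(x*a-1) := by omega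
    rw [repCount_pair_eq a b _ (b-1) hab (by omega) (by omega) (by omega) hle ⟨x*a-1, hkey⟩]
    rw [hkey, Nat.mul_div_cancel_left _ (show 0 < b by omega)]
    have e7 : (x-1)*a + a = x*a := by
      have h1 : x - 1 + 1 = x := by omega
      calc (x-1)*a + a = ((x-1)+1)*a := by ring
        _ = x*a := by rw [h1]
    have hdiv : (x*a - 1)/a = x - 1 := by
      apply Nat.div_eq_of_lt_le
      · omega
      · calc x*a - 1 < x*a := by omega
          _ = (x-1)*a + a := e7.symm
          _ = (x-1).succ * a := by rw [Nat.succ_mul]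
    rw [hdiv]
    omega

lemma genFrob_pair (a b x : ℕ) (hab : Nat.Coprime a b) (ha : 2 ≤ a) (hb : 2 ≤ b) :
    genFrob ![a,b] x = ((x:ℤ)+1)*a*b - a - b := by
  have hab3 : a + b ≤ a * b := by nlinarith
  have hab4 : a*b ≤ (x+1)*a*b := by nlinarith
  have hc : (((x+1)*a*b : ℕ) : ℤ) = ((x:ℤ)+1)*a*b := by push_cast; ring
  have hGn : (((x+1)*a*b - a - b : ℕ) : ℤ) = ((x:ℤ)+1)*a*b - a - b := by omega
  apply IsGreatest.csSup_eq
  constructor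
  · show repCountZ _ _ ≤ x
    rw [repCountZ, if_pos (by omega)]
    have : (((x:ℤ)+1)*↑a*↑b - ↑a - ↑b).toNat = (x+1)*a*b - a - b := by omega
    rw [this]
    exact repCount_frob a b x hab ha hb
  · rintro mz hmz
    by_contra hlt
    push_neg at hlt
    have h0 : (0:ℤ) ≤ mz := by omega
    have hM : (x+1)*a*b + 1 ≤ mz.toNat + a + b := by omega
    have := repCount_pair_ge a b x mz.toNat hab ha hb hM
    rw [Set.mem_setOf_eq, repCountZ, if_pos h0] at hmz
    omega

lemma repCount_triple (m a b M : ℕ) (hm : 0 < m) (ha : 0 < a) (hb : 0 < b) :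
    repCount ![m*a, a, b] M = ∑ u ∈ pairSet a b M, (u / m + 1) := by
  classical
  have hcard : ∑ u ∈ pairSet a b M, (u / m + 1)
      = ((pairSet a b M).sigma (fun u => Finset.range (u/m + 1))).card := by
    rw [Finset.card_sigma]
    simp
  rw [hcard, repCount]
  apply Finset.card_bij (fun x _ => (⟨(x 1 : ℕ) + m * (x 0 : ℕ), (x 0 : ℕ)⟩ : Σ _ : ℕ, ℕ))
  · intro x hx
    simp only [Finset.mem_filter, Finset.mem_univ, true_and, Fin.sum_univ_three,
      Matrix.cons_val_zero, Matrix.cons_val_one, Matrix.head_cons,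
      Matrix.cons_val_two, Matrix.tail_cons] at hx
    simp only [Finset.mem_sigma, pairSet, Finset.mem_filter, Finset.mem_range]
    set z := ((x 0 : Fin (M+1)) : ℕ)
    set u := ((x 1 : Fin (M+1)) : ℕ)
    set v := ((x 2 : Fin (M+1)) : ℕ)
    have hsum : m*a*z + a*u + b*v = M := hx
    have e1 : a*(u + m*z) = m*a*z + a*u := by ring
    have hU : a*(u + m*z) ≤ M := by omega
    have hU2 : u + m*z ≤ a*(u+m*z) := Nat.le_mul_of_pos_left _ ha
    refine ⟨⟨by omega, hU, ⟨v, by omega⟩⟩, ?_⟩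
    have : m*z ≤ u + m*z := by omega
    rw [Nat.lt_succ_iff, Nat.le_div_iff_mul_le hm, mul_comm]
    omega
  · intro x hx y hy hxy
    simp only [Finset.mem_filter, Finset.mem_univ, true_and, Fin.sum_univ_three,
      Matrix.cons_val_zero, Matrix.cons_val_one, Matrix.head_cons,
      Matrix.cons_val_two, Matrix.tail_cons] at hx hy
    have h0 : ((x 0 : Fin (M+1)) : ℕ) = ((y 0 : Fin (M+1)) : ℕ) := congrArg Sigma.snd hxy
    have hU : ((x 1 : Fin (M+1)) : ℕ) + m * ((x 0 : Fin (M+1)) : ℕ)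
        = ((y 1 : Fin (M+1)) : ℕ) + m * ((y 0 : Fin (M+1)) : ℕ) := congrArg Sigma.fst hxy
    rw [h0] at hU
    have h1 : ((x 1 : Fin (M+1)) : ℕ) = ((y 1 : Fin (M+1)) : ℕ) := by omega
    have hmz : m*a*((x 0 : Fin (M+1)) : ℕ) = m*a*((y 0 : Fin (M+1)) : ℕ) := by rw [h0]
    have hau : a*((x 1 : Fin (M+1)) : ℕ) = a*((y 1 : Fin (M+1)) : ℕ) := by rw [h1]
    have hb2 : b * ((x 2 : Fin (M+1)) : ℕ) = b * ((y 2 : Fin (M+1)) : ℕ) := by omega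
    have h2 : ((x 2 : Fin (M+1)) : ℕ) = ((y 2 : Fin (M+1)) : ℕ) :=
      Nat.eq_of_mul_eq_mul_left hb hb2
    funext j
    fin_cases j
    · exact Fin.ext h0
    · exact Fin.ext h1
    · exact Fin.ext h2
  · rintro ⟨U, z⟩ hUz
    simp only [Finset.mem_sigma, pairSet, Finset.mem_filter, Finset.mem_range,
      Nat.lt_succ_iff] at hUz
    obtain ⟨⟨hUr, hUle, v, hv⟩, hz⟩ := hUz
    rw [Nat.le_div_iff_mul_le hm] at hz
    have hmzU : m * z ≤ U := by rw [mul_comm]; exact hz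
    have hUU : U ≤ a*U := Nat.le_mul_of_pos_left _ ha
    have hvM : v ≤ M := by
      have : v ≤ b*v := Nat.le_mul_of_pos_left _ hb
      omega
    have hz3 : z ≤ z*m := Nat.le_mul_of_pos_right _ hm
    refine ⟨![⟨z, by omega⟩, ⟨U - m*z, by omega⟩, ⟨v, by omega⟩], ?_, ?_⟩
    · simp only [Finset.mem_filter, Finset.mem_univ, true_and, Fin.sum_univ_three,
        Matrix.cons_val_zero, Matrix.cons_val_one, Matrix.head_cons,
        Matrix.cons_val_two, Matrix.tail_cons]
      show m*a*z + a*(U - m*z) + b*v = M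
      have e2 : a*(U - m*z) + a*(m*z) = a*U := by
        rw [← Nat.left_distrib, Nat.sub_add_cancel hmzU]
      have e3 : a*(m*z) = m*a*z := by ring
      omega
    · show (⟨(U - m*z) + m*z, z⟩ : Σ _ : ℕ, ℕ) = ⟨U, z⟩
      congr 1
      omega

lemma cop_odd (m : ℕ) : Nat.Coprime (2*m+1) (2*m+3) := by
  have h : 2*m+3 = 2 + (2*m+1) := by omega
  rw [h, Nat.coprime_add_self_right]
  exact Nat.coprime_two_right.2 ⟨m, by ring⟩

lemma sum_lin (A : ℕ) : ∀ R : ℕ, (∑ j ∈ Finset.range R, (2*j + A)) + R = R*R + R*A := by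
  intro R
  induction R with
  | zero => simp
  | succ R ih =>
    rw [Finset.sum_range_succ]
    have e1 : (R+1)*(R+1) = R*R + 2*R + 1 := by ring
    have e2 : (R+1)*A = R*A + A := by ring
    linarith [ih, e1, e2]

lemma sum_split (A B c : ℕ) : ∀ R : ℕ, c ≤ R →
    (∑ j ∈ Finset.range R, (2*j + (if j < c then A else B))) + R + c*B
      = R*R + c*A + R*B := by
  intro R
  induction R with
  | zero => intro h; simp [Nat.le_zero.mp h]
  | succ R ih =>
    intro hc
    rcases Nat.lt_or_ge R c with h | h
    · have hcR : c = R + 1 := by omega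
      subst hcR
      have h2 : ∑ j ∈ Finset.range (R+1), (2*j + (if j < R+1 then A else B))
          = ∑ j ∈ Finset.range (R+1), (2*j + A) := by
        apply Finset.sum_congr rfl
        intro j hj
        rw [if_pos (Finset.mem_range.1 hj)]
      rw [h2]
      linarith [sum_lin A (R+1)]
    · rw [Finset.sum_range_succ, if_neg (by omega)]
      have e1 : (R+1)*(R+1) = R*R + 2*R + 1 := by ring
      have e2 : (R+1)*B = R*B + B := by ring
      linarith [ih h, e1, e2]

lemma caseA (m k i Mn : ℕ) (hik : i ≤ k) (hm1 : 3*i ≤ m) (hm2 : 3*k ≤ m + 2) (hm0 : 1 ≤ m)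
    (hMn : Mn + ((2*m+1)+(2*m+3)) = (i+1)*((2*m+1)*(2*m+3)) + 2*(k-i)*(m*(2*m+1))) :
    repCount ![m*(2*m+1), 2*m+1, 2*m+3] Mn = k*(k+1) + i := by
  obtain ⟨d, rfl⟩ : ∃ d, k = i + d := ⟨k - i, by omega⟩
  have hd : i + d - i = d := by omega
  rw [hd] at hMn
  have hcop := cop_odd m
  have ha : 2 ≤ 2*m+1 := by omega
  have hb : 2 ≤ 2*m+3 := by omega
  rw [repCount_triple m (2*m+1) (2*m+3) Mn (by omega) (by omega) (by omega)]
  rcases Nat.eq_zero_or_pos (i + d) with hk0 | hk1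
  · -- k = 0 : i = d = 0
    have hi0 : i = 0 := by omega
    have hd0 : d = 0 := by omega
    subst hi0; subst hd0
    have hM0 : Mn = (2*m+1)*(2*m+3) - (2*m+1) - (2*m+3) := by omega
    rw [hM0, pairSet_frob_empty _ _ hcop ha hb, Finset.sum_empty]
    simp
  · -- k ≥ 1
    obtain ⟨u₀, hu₀⟩ : ∃ u, u + 3*d = 2*m+2 := ⟨2*m+2 - 3*d, by omega⟩
    have hv₀pos : 1 ≤ (i+d)*(2*m+1) := Nat.mul_pos hk1 (by omega)
    obtain ⟨v₀, hv₀⟩ : ∃ v, v + 1 = (i+d)*(2*m+1) :=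
      ⟨(i+d)*(2*m+1) - 1, Nat.sub_add_cancel hv₀pos⟩
    have key : (2*m+1)*u₀ + (2*m+3)*v₀ + ((2*m+1)+(2*m+3)) = Mn + ((2*m+1)+(2*m+3)) := by
      rw [hMn]
      have hu₀' : (u₀:ℤ) + 3*d = 2*m+2 := by exact_mod_cast hu₀
      have hv₀' : (v₀:ℤ) + 1 = (i+d)*(2*m+1) := by exact_mod_cast hv₀
      have hZ : ((2*m+1)*u₀ + (2*m+3)*v₀ + ((2*m+1)+(2*m+3)) : ℤ)
          = ((i+1)*((2*m+1)*(2*m+3)) + 2*d*(m*(2*m+1)) : ℤ) := by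
        linear_combination (2*(m:ℤ)+1) * hu₀' + (2*(m:ℤ)+3) * hv₀'
      exact_mod_cast hZ
    obtain ⟨P, hP⟩ : ∃ P, P = (2*m+1)*u₀ := ⟨_, rfl⟩
    obtain ⟨Q, hQ⟩ : ∃ Q, Q = (2*m+3)*v₀ := ⟨_, rfl⟩
    rw [← hP, ← hQ] at key
    have hle : (2*m+1)*u₀ ≤ Mn := by rw [← hP]; omega
    have hdvd : Mn - (2*m+1)*u₀ = (2*m+3)*v₀ := by rw [← hP, ← hQ]; omega
    have himg := pairSet_eq_image (2*m+1) (2*m+3) Mn u₀ hcop (by omega) (by omega)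
      (by omega) hle ⟨v₀, hdvd⟩
    have hq1 : (Mn - (2*m+1)*u₀)/(2*m+3) = v₀ := by
      rw [hdvd, Nat.mul_div_cancel_left _ (show 0 < 2*m+3 by omega)]
    have hq2e : (i+d-1)*(2*m+1) + (2*m+1) = (i+d)*(2*m+1) := by
      have h1 : i+d-1+1 = i+d := by omega
      calc (i+d-1)*(2*m+1) + (2*m+1) = ((i+d-1)+1)*(2*m+1) := by ring
        _ = (i+d)*(2*m+1) := by rw [h1]
    have hq2 : v₀/(2*m+1) = i+d-1 := by
      apply Nat.div_eq_of_lt_le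
      · linarith [hq2e, hv₀]
      · have e : (i+d-1).succ*(2*m+1) = (i+d-1)*(2*m+1) + (2*m+1) := by rw [Nat.succ_mul]
        linarith [hq2e, hv₀, e]
    have hR : (Mn - (2*m+1)*u₀)/(2*m+3)/(2*m+1) + 1 = i + d := by
      rw [hq1, hq2]; omega
    rw [himg, hR, Finset.sum_image (by
      intro x hx y hy hxy
      have h : u₀ + x*(2*m+3) = u₀ + y*(2*m+3) := hxy
      exact Nat.eq_of_mul_eq_mul_right (show 0 < 2*m+3 by omega) (by omega))]
    have hterm : ∀ j ∈ Finset.range (i+d),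
        (u₀ + j*(2*m+3))/m + 1 = 2*j + (if j < d then 2 else 3) := by
      intro j hj
      rw [Finset.mem_range] at hj
      have e : u₀ + j*(2*m+3) = (u₀ + 3*j) + (2*j)*m := by ring
      rw [e, Nat.add_mul_div_right _ _ (show 0 < m by omega)]
      rcases Nat.lt_or_ge j d with h | h
      · have hdiv : (u₀ + 3*j)/m = 1 := by
          apply Nat.div_eq_of_lt_le
          · omega
          · have : Nat.succ 1 * m = 2*m := by ring
            omega
        rw [hdiv, if_pos h]
        omega
      · have hdiv : (u₀ + 3*j)/m = 2 := by
          apply Nat.div_eq_of_lt_le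
          · omega
          · have : Nat.succ 2 * m = 3*m := by ring
            omega
        rw [hdiv, if_neg (by omega)]
        omega
    rw [Finset.sum_congr rfl hterm]
    have hs := sum_split 2 3 d (i+d) (by omega)
    have e1 : (i+d)*(i+d+1) = (i+d)*(i+d) + (i+d) := by ring
    linarith [hs, e1]

lemma caseB (m k j Mn : ℕ) (hjk : j ≤ k) (hm1 : 3*k+1 ≤ m)
    (hMn : Mn + ((2*m+1)+(2*m+3)) = (j+1)*((2*m+1)*(2*m+3)) + (2*(k-j)+1)*(m*(2*m+1))) :
    repCount ![m*(2*m+1), 2*m+1, 2*m+3] Mn = k*(k+1) + (k+1+j) := by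
  obtain ⟨e, rfl⟩ : ∃ e, k = j + e := ⟨k - j, by omega⟩
  have hd : j + e - j = e := by omega
  rw [hd] at hMn
  have hcop := cop_odd m
  have hm0 : 1 ≤ m := by omega
  rw [repCount_triple m (2*m+1) (2*m+3) Mn (by omega) (by omega) (by omega)]
  obtain ⟨u₀, hu₀⟩ : ∃ u, u + 3*e + 1 = m := ⟨m - 3*e - 1, by omega⟩
  have hv₀pos : 1 ≤ (j+e+1)*(2*m+1) := Nat.mul_pos (by omega) (by omega)
  obtain ⟨v₀, hv₀⟩ : ∃ v, v + 1 = (j+e+1)*(2*m+1) :=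
    ⟨(j+e+1)*(2*m+1) - 1, Nat.sub_add_cancel hv₀pos⟩
  have key : (2*m+1)*u₀ + (2*m+3)*v₀ + ((2*m+1)+(2*m+3)) = Mn + ((2*m+1)+(2*m+3)) := by
    rw [hMn]
    have hu₀' : (u₀:ℤ) + 3*e + 1 = m := by exact_mod_cast hu₀
    have hv₀' : (v₀:ℤ) + 1 = (j+e+1)*(2*m+1) := by exact_mod_cast hv₀
    have hZ : ((2*m+1)*u₀ + (2*m+3)*v₀ + ((2*m+1)+(2*m+3)) : ℤ)
        = ((j+1)*((2*m+1)*(2*m+3)) + (2*e+1)*(m*(2*m+1)) : ℤ) := by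
      linear_combination (2*(m:ℤ)+1) * hu₀' + (2*(m:ℤ)+3) * hv₀'
    exact_mod_cast hZ
  obtain ⟨P, hP⟩ : ∃ P, P = (2*m+1)*u₀ := ⟨_, rfl⟩
  obtain ⟨Q, hQ⟩ : ∃ Q, Q = (2*m+3)*v₀ := ⟨_, rfl⟩
  rw [← hP, ← hQ] at key
  have hle : (2*m+1)*u₀ ≤ Mn := by rw [← hP]; omega
  have hdvd : Mn - (2*m+1)*u₀ = (2*m+3)*v₀ := by rw [← hP, ← hQ]; omega
  have himg := pairSet_eq_image (2*m+1) (2*m+3) Mn u₀ hcop (by omega) (by omega)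
    (by omega) hle ⟨v₀, hdvd⟩
  have hq1 : (Mn - (2*m+1)*u₀)/(2*m+3) = v₀ := by
    rw [hdvd, Nat.mul_div_cancel_left _ (show 0 < 2*m+3 by omega)]
  have hq2e : (j+e)*(2*m+1) + (2*m+1) = (j+e+1)*(2*m+1) := by ring
  have hq2 : v₀/(2*m+1) = j+e := by
    apply Nat.div_eq_of_lt_le
    · linarith [hq2e, hv₀]
    · have e2 : (j+e).succ*(2*m+1) = (j+e)*(2*m+1) + (2*m+1) := by rw [Nat.succ_mul]
      linarith [hq2e, hv₀, e2]
  have hR : (Mn - (2*m+1)*u₀)/(2*m+3)/(2*m+1) + 1 = j + e + 1 := by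
    rw [hq1, hq2]
  rw [himg, hR, Finset.sum_image (by
    intro x hx y hy hxy
    have h : u₀ + x*(2*m+3) = u₀ + y*(2*m+3) := hxy
    exact Nat.eq_of_mul_eq_mul_right (show 0 < 2*m+3 by omega) (by omega))]
  have hterm : ∀ w ∈ Finset.range (j+e+1),
      (u₀ + w*(2*m+3))/m + 1 = 2*w + (if w < e+1 then 1 else 2) := by
    intro w hw
    rw [Finset.mem_range] at hw
    have ee : u₀ + w*(2*m+3) = (u₀ + 3*w) + (2*w)*m := by ring
    rw [ee, Nat.add_mul_div_right _ _ (show 0 < m by omega)]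
    rcases Nat.lt_or_ge w (e+1) with h | h
    · have hdiv : (u₀ + 3*w)/m = 0 := Nat.div_eq_of_lt (by omega)
      rw [hdiv, if_pos h]
      omega
    · have hdiv : (u₀ + 3*w)/m = 1 := by
        apply Nat.div_eq_of_lt_le
        · omega
        · have : Nat.succ 1 * m = 2*m := by ring
          omega
      rw [hdiv, if_neg (by omega)]
      omega
  rw [Finset.sum_congr rfl hterm]
  have hs := sum_split 1 2 (e+1) (j+e+1) (by omega)
  have e1 : (j+e+1)*(j+e+1) = (j+e)*(j+e+1) + (j+e+1) := by ring
  linarith [hs, e1]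

/-- with `s = k(k+1) + i`, `0 ≤ i ≤ 2k+1`, for even `n > N_s^even`,
`d(g(n+1, n+3; x_s^even) + y_s^even·t_n ; t_n, n+1, n+3) = s`. -/
theorem stmt_8 (k i n : ℕ) (hi : i ≤ 2 * k + 1) (hn : Even n)
    (hbound : (n : ℤ) > NEven (k * (k + 1) + i)) :
    repCountZ ![t n, n + 1, n + 3]
        (genFrob ![n + 1, n + 3] (xEvenN k i) + ((yEvenN k i * t n : ℕ) : ℤ)) =
      k * (k + 1) + i := by
  obtain ⟨m', hm'⟩ := hn
  have hn2 : n = 2*m' := by omega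
  obtain ⟨m, rfl⟩ : ∃ m, n = 2*m := ⟨m', hn2⟩
  have ht : t (2*m) = m*(2*m+1) := by
    rw [t]
    have h1 : (2*m)*(2*m+1) = 2*(m*(2*m+1)) := by ring
    rw [h1, Nat.mul_div_cancel_left _ (by norm_num)]
  set q := Nat.sqrt (k*(k+1)+i+1) with hqdef
  have hb' : 3*q ≤ m + 2 := by
    rw [NEven] at hbound
    have h2 : 6*(q:ℤ) - 6 < 2*(m:ℤ) := by push_cast at hbound ⊢; exact hbound
    have h3 : 6*q ≤ 2*m + 5 := by exact_mod_cast (by linarith : (6*(q:ℤ)) ≤ 2*m + 5)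
    omega
  have hq1 : 1 ≤ q := Nat.le_sqrt.2 (by omega)
  have hm0 : 1 ≤ m := by omega
  have hek : k*(k+1) = k*k + k := by ring
  have hek1 : (k+1)*(k+1) = k*(k+1) + (k+1) := by ring
  rw [ht]
  by_cases hik : i ≤ k
  · -- Case A
    have hxv : xEvenN k i = i := by rw [xEvenN, if_pos hik]
    have hyv : yEvenN k i = 2*(k-i) := by rw [yEvenN, if_pos hik]
    rw [hxv, hyv, genFrob_pair _ _ i (cop_odd m) (by omega) (by omega)]
    have hkq : k ≤ q := Nat.le_sqrt.2 (by linarith)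
    have hm2 : 3*k ≤ m + 2 := by omega
    have hm1 : 3*i ≤ m := by
      rcases Nat.lt_or_ge i k with h | h
      · omega
      · have hik2 : i = k := by omega
        have : k+1 ≤ q := Nat.le_sqrt.2 (by rw [hik2] at *; linarith)
        omega
    obtain ⟨X, hX⟩ : ∃ X, X = (i+1)*((2*m+1)*(2*m+3)) + 2*(k-i)*(m*(2*m+1)) := ⟨_, rfl⟩
    have hge : (2*m+1)+(2*m+3) ≤ X := by
      rw [hX]
      have h4 : 4*m+4 ≤ (2*m+1)*(2*m+3) := by nlinarith
      have h5 : (2*m+1)*(2*m+3) ≤ (i+1)*((2*m+1)*(2*m+3)) := Nat.le_mul_of_pos_left _ (by omega)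
      omega
    set Mn := X - ((2*m+1)+(2*m+3)) with hMndef
    have hMn : Mn + ((2*m+1)+(2*m+3)) = X := by omega
    rw [hX] at hMn
    have hcast : ((i:ℤ)+1)*((2*m+1 : ℕ):ℤ)*((2*m+3 : ℕ):ℤ) - ((2*m+1 : ℕ):ℤ) - ((2*m+3 : ℕ):ℤ)
        + ((2*(k-i)*(m*(2*m+1)) : ℕ) : ℤ) = ((Mn : ℕ) : ℤ) := by
      have h := hMn
      zify [hik] at h
      push_cast [Nat.cast_sub hik]
      linear_combination -h
    rw [hcast]
    simp only [repCountZ]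
    rw [if_pos (Int.natCast_nonneg Mn), Int.toNat_natCast]
    exact caseA m k i Mn hik hm1 hm2 hm0 hMn
  · -- Case B
    obtain ⟨j, rfl⟩ : ∃ j, i = k+1+j := ⟨i-k-1, by omega⟩
    have hjk : j ≤ k := by omega
    have hxv : xEvenN k (k+1+j) = j := by rw [xEvenN, if_neg (by omega)]; omega
    have hyv : yEvenN k (k+1+j) = 2*(k-j)+1 := by rw [yEvenN, if_neg (by omega)]; omega
    rw [hxv, hyv, genFrob_pair _ _ j (cop_odd m) (by omega) (by omega)]
    have hkq : k+1 ≤ q := Nat.le_sqrt.2 (by linarith)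
    have hm1 : 3*k+1 ≤ m := by omega
    obtain ⟨X, hX⟩ : ∃ X, X = (j+1)*((2*m+1)*(2*m+3)) + (2*(k-j)+1)*(m*(2*m+1)) := ⟨_, rfl⟩
    have hge : (2*m+1)+(2*m+3) ≤ X := by
      rw [hX]
      have h4 : 4*m+4 ≤ (2*m+1)*(2*m+3) := by nlinarith
      have h5 : (2*m+1)*(2*m+3) ≤ (j+1)*((2*m+1)*(2*m+3)) := Nat.le_mul_of_pos_left _ (by omega)
      omega
    set Mn := X - ((2*m+1)+(2*m+3)) with hMndef
    have hMn : Mn + ((2*m+1)+(2*m+3)) = X := by omega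
    rw [hX] at hMn
    have hcast : ((j:ℤ)+1)*((2*m+1 : ℕ):ℤ)*((2*m+3 : ℕ):ℤ) - ((2*m+1 : ℕ):ℤ) - ((2*m+3 : ℕ):ℤ)
        + (((2*(k-j)+1)*(m*(2*m+1)) : ℕ) : ℤ) = ((Mn : ℕ) : ℤ) := by
      have h := hMn
      zify [hjk] at h
      push_cast [Nat.cast_sub hjk]
      linear_combination -h
    rw [hcast]
    simp only [repCountZ]
    rw [if_pos (Int.natCast_nonneg Mn), Int.toNat_natCast]
    exact caseB m k j Mn hjk hm1 hMn
end
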